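/- arXiv:1512.02720 — 6 statements merged into one kernel-verified Lean document; each statement's English description precedes it below -/
import Mathlib

section
/- Let R be a commutative ring with elements x, y, z, and for m ≥ 1 let U_m be the m×m matrix over R whose (i,j) entry (with 1-based indices) is x if i+j = m, z if i+j = m+1, y if i+j = m+2, and 0 otherwise. Set d_{-1} = 0, d_0 = 1, and d_m = det(U_m) for m ≥ 1. Then for every m ≥ 1 one has d_m = (-1)^{m-1} z d_{m-1} + x y d_{m-2}. -/
/-- The `m × m` matrix `U_m` over a commutative ring `R` with distinguished elements
`x, y, z`: its `(i,j)` entry (with 1-based indices) is `x` if `i + j = m`,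
`z` if `i + j = m + 1`, `y` if `i + j = m + 2`, and `0` otherwise. -/
def Umat {R : Type*} [CommRing R] (x y z : R) (m : ℕ) : Matrix (Fin m) (Fin m) R :=
  Matrix.of fun i j =>
    if (i : ℕ) + (j : ℕ) + 2 = m then x
    else if (i : ℕ) + (j : ℕ) + 2 = m + 1 then z
    else if (i : ℕ) + (j : ℕ) + 2 = m + 2 then y
    else 0

/-- `d_m = det U_m`; in particular `d_0 = 1` (determinant of the empty matrix). -/
noncomputable def dSeq {R : Type*} [CommRing R] (x y z : R) (m : ℕ) : R :=
  (Umat x y z m).det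

lemma succAbove_one_succ (n : ℕ) (i : Fin n) :
    (((1 : Fin (n+2)).succAbove (Fin.succ i)) : ℕ) = (i : ℕ) + 2 := by
  simp [Fin.succAbove, Fin.lt_def]

lemma succAbove_one_zero (n : ℕ) :
    (((1 : Fin (n+2)).succAbove 0) : ℕ) = 0 := by
  simp [Fin.succAbove, Fin.lt_def]

lemma Umat_minor1 {R : Type*} [CommRing R] (x y z : R) (m : ℕ) :
    (Umat x y z (m+1)).submatrix Fin.succ Fin.castSucc = Umat x y z m := by
  ext i j
  simp only [Umat, Matrix.submatrix_apply, Matrix.of_apply, Fin.val_succ, Fin.coe_castSucc]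
  split_ifs <;> first | rfl | omega

lemma Umat_minor3 {R : Type*} [CommRing R] (x y z : R) (n : ℕ) :
    (((Umat x y z (n+2)).submatrix ((1 : Fin (n+2)).succAbove) Fin.castSucc).submatrix
      Fin.succ Fin.castSucc) = Umat x y z n := by
  ext i j
  simp only [Umat, Matrix.submatrix_apply, Matrix.of_apply, Fin.coe_castSucc,
    succAbove_one_succ]
  split_ifs <;> first | rfl | omega

lemma minor2_det {R : Type*} [CommRing R] (x y z : R) (n : ℕ) :
    ((Umat x y z (n+2)).submatrix ((1 : Fin (n+2)).succAbove) Fin.castSucc).det =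
      (-1:R)^n * x * dSeq x y z n := by
  rw [Matrix.det_succ_row _ 0]
  rw [Finset.sum_eq_single (Fin.last n)]
  · have he : (Umat x y z (n+2)).submatrix ((1 : Fin (n+2)).succAbove) Fin.castSucc 0
        (Fin.last n) = x := by
      simp only [Matrix.submatrix_apply, Umat, Matrix.of_apply, Fin.coe_castSucc,
        succAbove_one_zero, Fin.val_last]
      split_ifs <;> first | rfl | omega
    rw [he, Fin.succAbove_zero, Fin.succAbove_last, Umat_minor3, dSeq]
    simp
  · intro j _ hj
    have hjn : (j : ℕ) < n := by
      rcases Nat.lt_or_ge (j : ℕ) n with h | h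
      · exact h
      · have := j.isLt
        exact absurd (Fin.ext (by simp; omega : (j:ℕ) = (Fin.last n : ℕ))) hj
    have he : (Umat x y z (n+2)).submatrix ((1 : Fin (n+2)).succAbove) Fin.castSucc 0 j = 0 := by
      simp only [Matrix.submatrix_apply, Umat, Matrix.of_apply, Fin.coe_castSucc,
        succAbove_one_zero]
      split_ifs <;> first | rfl | omega
    rw [he]; ring
  · intro h; simp at h

/-- For every `m ≥ 1` one has `d_m = (-1)^(m-1) z d_(m-1) + x y d_(m-2)`,
where `d_(-1) = 0` (the case `m = 1`). -/
theorem dSeq_recurrence {R : Type*} [CommRing R] (x y z : R) (m : ℕ) (hm : 1 ≤ m) :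
    dSeq x y z m =
      (-1 : R) ^ (m - 1) * z * dSeq x y z (m - 1) +
        x * y * (if m = 1 then 0 else dSeq x y z (m - 2)) := by
  obtain ⟨n, rfl⟩ : ∃ n, m = n + 1 := ⟨m - 1, by omega⟩
  cases n with
  | zero =>
      simp only [dSeq, show (0:ℕ)+1 = 1 from rfl, show (1:ℕ)-1 = 0 from rfl, if_pos rfl]
      rw [Matrix.det_fin_one, Matrix.det_fin_zero]
      norm_num [Umat]
  | succ n =>
      simp only [Nat.add_sub_cancel, if_neg (by omega : ¬ n + 1 + 1 = 1),
        show n + 1 + 1 - 2 = n from by omega]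
      rw [dSeq, Matrix.det_succ_column _ (Fin.last (n+1)), Fin.sum_univ_succ, Fin.sum_univ_succ]
      have htail : ∀ i : Fin n,
          (-1:R) ^ ((i.succ.succ : ℕ) + ((Fin.last (n+1)) : ℕ)) *
            Umat x y z (n + 2) i.succ.succ (Fin.last (n + 1)) *
            ((Umat x y z (n + 2)).submatrix i.succ.succ.succAbove
              (Fin.last (n + 1)).succAbove).det = 0 := by
        intro i
        have : Umat x y z (n + 2) i.succ.succ (Fin.last (n + 1)) = 0 := by
          simp only [Umat, Matrix.of_apply, Fin.val_succ, Fin.val_last]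
          split_ifs <;> first | rfl | omega
        rw [this]; ring
      rw [Finset.sum_congr rfl (fun i _ => htail i), Finset.sum_const_zero]
      have e0 : Umat x y z (n + 2) 0 (Fin.last (n + 1)) = z := by
        simp only [Umat, Matrix.of_apply]
        rw [if_neg (by simp), if_pos (by simp)]
      have e1 : Umat x y z (n + 2) (Fin.succ 0) (Fin.last (n + 1)) = y := by
        simp only [Umat, Matrix.of_apply]
        rw [if_neg (by simp; omega), if_neg (by simp), if_pos (by simp; omega)]
      rw [e0, e1, Fin.succAbove_zero, Fin.succAbove_last, Umat_minor1,
        show (Fin.succ 0 : Fin (n+2)) = 1 from rfl, minor2_det]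
      simp only [Fin.val_zero, Fin.val_last, Fin.val_succ, Fin.val_one, zero_add, add_zero, dSeq]
      have hpow : ((-1:R)^(1 + (n+1)) * (-1:R)^n) = 1 := by
        rw [← pow_add, show 1 + (n+1) + n = 2*(n+1) from by ring, pow_mul]
        norm_num
      linear_combination (y * x * (Umat x y z n).det) * hpow
end

section
/- Let R be a commutative ring with elements x, y, z, and let d_m be as defined via determinants of the matrices U_m. Then for every m ≥ 1 one has d_m = Σ_{j=0}^{⌊m/2⌋} C(m−j, j) · (−1)^{⌊(m−2j)/2⌋} · x^j y^j z^{m−2j}, where C(m−j, j) denotes a binomial coefficient. -/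
section
variable {R : Type*} [CommRing R] (x y z : R)


lemma Umat_eq_x {m : ℕ} {i j : Fin m} (h : (i:ℕ) + (j:ℕ) + 2 = m) :
    Umat x y z m i j = x := by
  simp only [Umat, Matrix.of_apply]; rw [if_pos h]

lemma Umat_eq_z {m : ℕ} {i j : Fin m} (h : (i:ℕ) + (j:ℕ) + 2 = m + 1) :
    Umat x y z m i j = z := by
  simp only [Umat, Matrix.of_apply]; rw [if_neg (by omega), if_pos h]

lemma Umat_eq_y {m : ℕ} {i j : Fin m} (h : (i:ℕ) + (j:ℕ) + 2 = m + 2) :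
    Umat x y z m i j = y := by
  simp only [Umat, Matrix.of_apply]; rw [if_neg (by omega), if_neg (by omega), if_pos h]

lemma Umat_eq_zero {m : ℕ} {i j : Fin m}
    (h : (i:ℕ) + (j:ℕ) + 2 < m ∨ m + 2 < (i:ℕ) + (j:ℕ) + 2) :
    Umat x y z m i j = 0 := by
  simp only [Umat, Matrix.of_apply]
  rw [if_neg (by omega), if_neg (by omega), if_neg (by omega)]

lemma succAbove_mid_val_lt {m : ℕ} (q : Fin (m+1)) (hq : (q:ℕ) < m) :
    (((Fin.last m).castSucc).succAbove q : ℕ) = q := by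
  rw [Fin.succAbove, if_pos (by simpa [Fin.lt_def] using hq)]
  simp

lemma succAbove_mid_val_last {m : ℕ} :
    (((Fin.last m).castSucc).succAbove (Fin.last m) : ℕ) = m + 1 := by
  rw [Fin.succAbove, if_neg (by simp [Fin.lt_def])]
  simp

lemma dSeq_rec (m : ℕ) :
    dSeq x y z (m+2) = x * y * dSeq x y z m + (-1:R)^(m+1) * z * dSeq x y z (m+1) := by
  rw [dSeq, Matrix.det_succ_row_zero, Fin.sum_univ_castSucc, Fin.sum_univ_castSucc]
  rw [Finset.sum_eq_zero (fun i _ => by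
    rw [Umat_eq_zero x y z (by left; have := i.isLt; simp)]; ring)]
  have e1 : Umat x y z (m+2) 0 ((Fin.last m).castSucc) = x :=
    Umat_eq_x x y z (by simp)
  have e2 : Umat x y z (m+2) 0 (Fin.last (m+1)) = z :=
    Umat_eq_z x y z (by simp)
  have m2 : (Umat x y z (m+2)).submatrix Fin.succ (Fin.last (m+1)).succAbove
      = Umat x y z (m+1) := by
    rw [Fin.succAbove_last]
    ext i j
    simp only [Matrix.submatrix_apply, Umat, Matrix.of_apply, Fin.val_succ, Fin.coe_castSucc]
    split_ifs <;> first | rfl | (exfalso; omega)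
  set M1 := (Umat x y z (m+2)).submatrix Fin.succ ((Fin.last m).castSucc).succAbove with hM1
  have m1 : M1.det = (-1:R)^m * y * (Umat x y z m).det := by
    rw [Matrix.det_succ_column M1 (Fin.last m), Fin.sum_univ_succ]
    rw [Finset.sum_eq_zero (fun i _ => by
      have : M1 i.succ (Fin.last m) = 0 := by
        rw [hM1, Matrix.submatrix_apply]
        exact Umat_eq_zero x y z (by right; rw [succAbove_mid_val_last]; have := i.isLt; simp; omega)
      rw [this]; ring)]
    have e3 : M1 0 (Fin.last m) = y := by
      rw [hM1, Matrix.submatrix_apply]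
      exact Umat_eq_y x y z (by rw [succAbove_mid_val_last]; simp; omega)
    have m3 : M1.submatrix (Fin.succAbove 0) (Fin.last m).succAbove = Umat x y z m := by
      rw [Fin.succAbove_last, Fin.succAbove_zero]
      ext i j
      have hj : ((j.castSucc : Fin (m+1)) : ℕ) < m := by simpa using j.isLt
      rw [Matrix.submatrix_apply, hM1, Matrix.submatrix_apply]
      simp only [Umat, Matrix.of_apply, Fin.val_succ, succAbove_mid_val_lt _ hj,
        Fin.coe_castSucc]
      split_ifs <;> first | rfl | (exfalso; omega)
    rw [e3, m3]
    simp only [Fin.val_zero, Fin.val_last, zero_add]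
    ring
  rw [e1, e2, m1, m2]
  simp only [Fin.coe_castSucc, Fin.val_last]
  rw [dSeq, dSeq]
  have hsq : ((-1:R))^m * (-1)^m = 1 := by
    rw [← pow_add]; exact Even.neg_one_pow ⟨m, rfl⟩
  linear_combination (x * y * (Umat x y z m).det) * hsq


/-- Term of the closed formula. -/
def Tterm (n j : ℕ) : R :=
  ((n - j).choose j : R) * (-1 : R) ^ ((n - 2 * j) / 2) * x ^ j * y ^ j * z ^ (n - 2 * j)

lemma Tterm_eq_zero {n j : ℕ} (h : n / 2 + 1 ≤ j) : Tterm x y z n j = 0 := by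
  rw [Tterm, Nat.choose_eq_zero_of_lt (by omega)]
  simp

lemma sum_extend (n K : ℕ) (h : n / 2 + 1 ≤ K) :
    ∑ j ∈ Finset.range K, Tterm x y z n j = ∑ j ∈ Finset.range (n / 2 + 1), Tterm x y z n j := by
  refine (Finset.sum_subset (Finset.range_subset_range.2 h) ?_).symm
  intro j _ hj
  exact Tterm_eq_zero x y z (by simpa using hj)

lemma T_rec (m : ℕ) :
    ∑ j ∈ Finset.range ((m + 2) / 2 + 1), Tterm x y z (m + 2) j
      = x * y * (∑ j ∈ Finset.range (m / 2 + 1), Tterm x y z m j)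
        + (-1 : R) ^ (m + 1) * z * (∑ j ∈ Finset.range ((m + 1) / 2 + 1), Tterm x y z (m + 1) j) := by
  rw [show (m + 2) / 2 + 1 = m / 2 + 2 from by omega,
    ← sum_extend x y z (m + 1) (m / 2 + 2) (by omega)]
  rw [Finset.sum_range_succ' (fun j => Tterm x y z (m + 2) j) (m / 2 + 1),
    Finset.sum_range_succ' (fun j => Tterm x y z (m + 1) j) (m / 2 + 1)]
  have h0 : Tterm x y z (m + 2) 0 = (-1 : R) ^ (m + 1) * z * Tterm x y z (m + 1) 0 := by
    simp only [Tterm, Nat.sub_zero, Nat.choose_zero_right, Nat.cast_one, mul_zero, pow_zero]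
    have hs : (-1 : R) ^ ((m + 2) / 2) = (-1) ^ (m + 1) * (-1) ^ ((m + 1) / 2) := by
      rw [← pow_add, neg_one_pow_eq_pow_mod_two ((m + 2) / 2),
        neg_one_pow_eq_pow_mod_two (m + 1 + (m + 1) / 2)]
      congr 1
      rcases Nat.even_or_odd m with ⟨t, rfl⟩ | ⟨t, rfl⟩ <;> omega
    rw [hs, show m + 2 = (m + 1) + 1 from rfl, pow_succ]
    ring
  have hterm : ∀ j ∈ Finset.range (m / 2 + 1),
      Tterm x y z (m + 2) (j + 1)
        = x * y * Tterm x y z m j + (-1 : R) ^ (m + 1) * z * Tterm x y z (m + 1) (j + 1) := by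
    intro j hj
    rw [Finset.mem_range] at hj
    have hj' : 2 * j ≤ m := by omega
    simp only [Tterm]
    rw [show m + 2 - (j + 1) = (m - j) + 1 from by omega,
      show m + 1 - (j + 1) = m - j from by omega,
      show m + 2 - 2 * (j + 1) = m - 2 * j from by omega,
      Nat.choose_succ_succ (m - j) j, Nat.cast_add]
    by_cases hc : 2 * j + 1 ≤ m
    · have e3 : m + 1 - 2 * (j + 1) = m - 2 * j - 1 := by omega
      have hz' : z ^ (m - 2 * j) = z * z ^ (m - 2 * j - 1) := by
        rw [← pow_succ']
        congr 1
        omega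
      have hs : (-1 : R) ^ (m + 1) * (-1) ^ ((m - 2 * j - 1) / 2) = (-1) ^ ((m - 2 * j) / 2) := by
        rw [← pow_add, neg_one_pow_eq_pow_mod_two (m + 1 + (m - 2 * j - 1) / 2),
          neg_one_pow_eq_pow_mod_two ((m - 2 * j) / 2)]
        congr 1
        obtain ⟨k, hk⟩ : ∃ k, m = 2 * j + k := ⟨m - 2 * j, by omega⟩
        subst hk
        rw [show 2 * j + k - 2 * j = k from by omega]
        rcases Nat.even_or_odd k with ⟨t, rfl⟩ | ⟨t, rfl⟩ <;> omega
      rw [e3, hz']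
      linear_combination (-(((m - j).choose (j + 1) : R) * x ^ (j + 1) * y ^ (j + 1) * z *
        z ^ (m - 2 * j - 1))) * hs
    · have hm2j : m = 2 * j := by omega
      rw [Nat.choose_eq_zero_of_lt (show m - j < j + 1 from by omega)]
      simp only [Nat.cast_zero]
      ring
  rw [Finset.sum_congr rfl hterm, h0, Finset.sum_add_distrib]
  simp only [mul_add, Finset.mul_sum]
  ring

lemma dSeq_formula (m : ℕ) :
    dSeq x y z m = ∑ j ∈ Finset.range (m / 2 + 1), Tterm x y z m j := by
  induction m using Nat.strong_induction_on with
  | _ m ih =>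
    match m with
    | 0 => simp [dSeq, Matrix.det_isEmpty, Tterm]
    | 1 =>
      rw [dSeq, Matrix.det_fin_one]
      simp [Umat, Tterm]
    | (k + 2) =>
      rw [dSeq_rec, ih k (by omega), ih (k + 1) (by omega), ← T_rec]

end

/-- For every `m ≥ 1` one has
`d_m = ∑_{j=0}^{⌊m/2⌋} C(m-j, j) (-1)^{⌊(m-2j)/2⌋} x^j y^j z^{m-2j}`. -/
theorem dSeq_closed_formula {R : Type*} [CommRing R] (x y z : R) (m : ℕ) (hm : 1 ≤ m) :
    dSeq x y z m =
      ∑ j ∈ Finset.range (m / 2 + 1),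
        ((m - j).choose j : R) * (-1 : R) ^ ((m - 2 * j) / 2) *
          x ^ j * y ^ j * z ^ (m - 2 * j) := by
  rw [dSeq_formula]
  rfl
end

section
/- Let (Q, 𝔫) be a regular local ring with residue field k, and let 𝔤 ⊆ 𝔫² be an 𝔫-primary ideal minimally generated by elements g_0, …, g_k. Let s_1, …, s_t be elements of Q whose classes in Q/𝔤 form a k-basis of the socle of Q/𝔤. Set 𝔞 = 𝔫·g_0 + (g_1, …, g_k). Then 𝔞 is 𝔫-primary, and if 𝔫·s_i ⊆ 𝔞 holds for all i = 1, …, t, then the classes of g_0, s_1, …, s_t in Q/𝔞 form a k-basis of the socle of Q/𝔞; in particular the type of Q/𝔞 equals the type of Q/𝔤 plus 1. -/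
/-- A commutative Noetherian local ring is *regular* if its maximal ideal can be
generated by `n` elements, where `n` is the Krull dimension of the ring. -/
def IsRegularLocal (Q : Type*) [CommRing Q] [IsLocalRing Q] : Prop :=
  IsNoetherianRing Q ∧ ∃ (n : ℕ) (f : Fin n → Q),
    Ideal.span (Set.range f) = IsLocalRing.maximalIdeal Q ∧ ringKrullDim Q = n

/-- The socle of the quotient ring `Q ⧸ 𝔞` of a local ring `(Q, 𝔫)` (with `𝔞 ≤ 𝔫`),
namely the annihilator `(0 : 𝔪)` of the maximal ideal `𝔪 = 𝔫(Q ⧸ 𝔞)` of `Q ⧸ 𝔞`. -/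
noncomputable def quotSocle {Q : Type*} [CommRing Q] (𝔫 𝔞 : Ideal Q) :
    Ideal (Q ⧸ 𝔞) :=
  Submodule.annihilator (𝔫.map (Ideal.Quotient.mk 𝔞))

lemma mem_quotSocle_iff {Q : Type*} [CommRing Q] (𝔫 𝔞 : Ideal Q) (x : Q) :
    Ideal.Quotient.mk 𝔞 x ∈ quotSocle 𝔫 𝔞 ↔ ∀ n ∈ 𝔫, n * x ∈ 𝔞 := by
  unfold quotSocle
  rw [Submodule.mem_annihilator]
  constructor
  · intro hx n hn
    have := hx (Ideal.Quotient.mk 𝔞 n) (Ideal.mem_map_of_mem _ hn)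
    rw [smul_eq_mul, ← map_mul, Ideal.Quotient.eq_zero_iff_mem, mul_comm] at this
    exact this
  · intro hx y hy
    obtain ⟨n, hn, rfl⟩ := (Ideal.mem_map_iff_of_surjective _
      Ideal.Quotient.mk_surjective).mp hy
    rw [smul_eq_mul, ← map_mul, Ideal.Quotient.eq_zero_iff_mem, mul_comm]
    exact hx n hn

/-- Let `(Q, 𝔫)` be a regular local ring with residue field `k`, and `𝔤 ⊆ 𝔫²` an
`𝔫`-primary ideal minimally generated by `g 0, …, g k`.  Let `s 1, …, s t` be elements
of `Q` whose classes form a `k`-basis of the socle of `Q ⧸ 𝔤` (spanning and linearly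
independent over `k`).  Set `𝔞 = 𝔫·g 0 + (g 1, …, g k)`.  Then `𝔞` is `𝔫`-primary and,
if `𝔫·s i ⊆ 𝔞` for all `i`, the classes of `g 0, s 1, …, s t` form a `k`-basis of the
socle of `Q ⧸ 𝔞`; in particular the type of `Q ⧸ 𝔞` is the type of `Q ⧸ 𝔤` plus one. -/
theorem trimmed_ideal_socle_basis {Q : Type*} [CommRing Q] [IsLocalRing Q]
    (hreg : IsRegularLocal Q)
    (𝔫 : Ideal Q) (h𝔫 : 𝔫 = IsLocalRing.maximalIdeal Q)
    (𝔤 : Ideal Q) (h𝔤𝔫 : 𝔤 ≤ 𝔫 ^ 2) (h𝔤prim : 𝔤.radical = 𝔫)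
    (k : ℕ) (g : Fin (k + 1) → Q)
    (hgen : Ideal.span (Set.range g) = 𝔤)
    (hmin : ∀ c : Fin (k + 1) → Q, (∑ i, c i * g i) ∈ 𝔫 * 𝔤 → ∀ i, c i ∈ 𝔫)
    (t : ℕ) (s : Fin t → Q)
    (hs_span : quotSocle 𝔫 𝔤 = Ideal.span (Set.range fun i => Ideal.Quotient.mk 𝔤 (s i)))
    (hs_indep : ∀ c : Fin t → Q, (∑ i, c i * s i) ∈ 𝔤 → ∀ i, c i ∈ 𝔫)
    (𝔞 : Ideal Q)
    (h𝔞 : 𝔞 = 𝔫 * Ideal.span {g 0} ⊔ Ideal.span (Set.range fun i : Fin k => g i.succ)) :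
    𝔞.radical = 𝔫 ∧
      ((∀ i, 𝔫 * Ideal.span {s i} ≤ 𝔞) →
        (quotSocle 𝔫 𝔞 =
            Ideal.span (insert (Ideal.Quotient.mk 𝔞 (g 0))
              (Set.range fun i => Ideal.Quotient.mk 𝔞 (s i))) ∧
          ∀ (c₀ : Q) (c : Fin t → Q),
            (c₀ * g 0 + ∑ i, c i * s i) ∈ 𝔞 → c₀ ∈ 𝔫 ∧ ∀ i, c i ∈ 𝔫)) := by
  -- Set up notation
  set G0 := Ideal.span {g 0} with hG0
  set Gs := Ideal.span (Set.range fun i : Fin k => g i.succ) with hGs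
  have hrange : Set.range g = insert (g 0) (Set.range fun j : Fin k => g j.succ) := by
    ext x
    constructor
    · rintro ⟨i, rfl⟩
      refine Fin.cases ?_ (fun j => ?_) i
      · exact Set.mem_insert _ _
      · exact Set.mem_insert_iff.mpr (Or.inr ⟨j, rfl⟩)
    · rintro (rfl | ⟨j, rfl⟩)
      · exact ⟨0, rfl⟩
      · exact ⟨j.succ, rfl⟩
  have h𝔤split : 𝔤 = G0 ⊔ Gs := by
    rw [← hgen, hrange, Ideal.span_insert]
  have h𝔞𝔤 : 𝔞 ≤ 𝔤 := by
    rw [h𝔞, h𝔤split]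
    exact sup_le_sup Ideal.mul_le_right le_rfl
  have h𝔫𝔤𝔞 : 𝔫 * 𝔤 ≤ 𝔞 := by
    rw [h𝔤split, Ideal.mul_sup, h𝔞]
    exact sup_le_sup le_rfl Ideal.mul_le_right
  have hGs𝔞 : Gs ≤ 𝔞 := by rw [h𝔞]; exact le_sup_right
  have h𝔫prime : 𝔫.IsPrime := h𝔫 ▸ (IsLocalRing.maximalIdeal.isMaximal Q).isPrime
  constructor
  · -- radical
    refine le_antisymm ?_ ?_
    · have := Ideal.radical_mono h𝔞𝔤
      rwa [h𝔤prim] at this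
    · have h1 : (𝔫 * 𝔤).radical = 𝔫 := by
        rw [Ideal.radical_mul, h𝔤prim, h𝔫prime.radical, inf_idem]
      rw [← h1]
      exact Ideal.radical_mono h𝔫𝔤𝔞
  · intro hsub
    constructor
    · -- socle span equality
      refine le_antisymm ?_ ?_
      · intro xbar hx
        obtain ⟨x, rfl⟩ := Ideal.Quotient.mk_surjective xbar
        rw [mem_quotSocle_iff] at hx
        have hx𝔤 : Ideal.Quotient.mk 𝔤 x ∈ quotSocle 𝔫 𝔤 :=
          (mem_quotSocle_iff 𝔫 𝔤 x).mpr fun n hn => h𝔞𝔤 (hx n hn)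
        rw [hs_span] at hx𝔤
        have hx𝔤' : Ideal.Quotient.mk 𝔤 x ∈ (Ideal.span (Set.range s)).map
            (Ideal.Quotient.mk 𝔤) := by
          rw [Ideal.map_span, ← Set.range_comp]
          exact hx𝔤
        obtain ⟨z, hz, hzx⟩ := (Ideal.mem_map_iff_of_surjective _
          Ideal.Quotient.mk_surjective).mp hx𝔤'
        obtain ⟨c, hc⟩ := (Submodule.mem_span_range_iff_exists_fun Q).mp hz
        have hxz : x - z ∈ 𝔤 := by
          rw [← Ideal.Quotient.eq] at *
          exact hzx.symm
        rw [← hgen] at hxz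
        obtain ⟨e, he⟩ := (Submodule.mem_span_range_iff_exists_fun Q).mp hxz
        simp only [smul_eq_mul] at hc he
        rw [Fin.sum_univ_succ] at he
        have hx_eq : x = (∑ i, c i * s i) +
            (e 0 * g 0 + ∑ j : Fin k, e j.succ * g j.succ) := by
          linear_combination -hc - he
        have htail : (∑ j : Fin k, e j.succ * g j.succ) ∈ 𝔞 := by
          refine hGs𝔞 (Submodule.sum_mem _ fun j _ => ?_)
          exact Ideal.mul_mem_left _ _ (Ideal.subset_span ⟨j, rfl⟩)
        rw [hx_eq, map_add, map_add, map_sum, map_mul,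
          Ideal.Quotient.eq_zero_iff_mem.mpr htail, add_zero]
        refine Ideal.add_mem _ (Submodule.sum_mem _ fun i _ => ?_) ?_
        · rw [map_mul]
          exact Ideal.mul_mem_left _ _
            (Ideal.subset_span (Set.mem_insert_iff.mpr (Or.inr ⟨i, rfl⟩)))
        · exact Ideal.mul_mem_left _ _ (Ideal.subset_span (Set.mem_insert _ _))
      · rw [Ideal.span_le]
        rintro y (rfl | ⟨i, rfl⟩)
        · exact (mem_quotSocle_iff 𝔫 𝔞 (g 0)).mpr fun n hn => by
            rw [h𝔞]
            exact Submodule.mem_sup_left (Ideal.mul_mem_mul hn (Ideal.subset_span rfl))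
        · exact (mem_quotSocle_iff 𝔫 𝔞 (s i)).mpr fun n hn =>
            hsub i (Ideal.mul_mem_mul hn (Ideal.subset_span rfl))
    · -- linear independence
      intro c₀ c hmem
      have hg0𝔤 : g 0 ∈ 𝔤 := by rw [← hgen]; exact Ideal.subset_span ⟨0, rfl⟩
      have hsum𝔤 : (∑ i, c i * s i) ∈ 𝔤 := by
        have : (c₀ * g 0 + ∑ i, c i * s i) - c₀ * g 0 ∈ 𝔤 :=
          Ideal.sub_mem _ (h𝔞𝔤 hmem) (Ideal.mul_mem_left _ _ hg0𝔤)
        simpa using this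
      have hc : ∀ i, c i ∈ 𝔫 := hs_indep c hsum𝔤
      refine ⟨?_, hc⟩
      have hsum𝔞 : (∑ i, c i * s i) ∈ 𝔞 :=
        Submodule.sum_mem _ fun i _ =>
          hsub i (Ideal.mul_mem_mul (hc i) (Ideal.subset_span rfl))
      have hc0g0 : c₀ * g 0 ∈ 𝔞 := by
        have : (c₀ * g 0 + ∑ i, c i * s i) - (∑ i, c i * s i) ∈ 𝔞 :=
          Ideal.sub_mem _ hmem hsum𝔞
        simpa using this
      rw [h𝔞] at hc0g0
      obtain ⟨y, hy, z, hz, hyz⟩ := Submodule.mem_sup.mp hc0g0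
      obtain ⟨m, hm, rfl⟩ := Ideal.mem_mul_span_singleton.mp hy
      obtain ⟨d, hd⟩ := (Submodule.mem_span_range_iff_exists_fun Q).mp hz
      simp only [smul_eq_mul] at hd
      have hzero : (∑ i, (Fin.cases (c₀ - m) (fun j => -d j) : Fin (k+1) → Q) i * g i)
          ∈ 𝔫 * 𝔤 := by
        have : (∑ i, (Fin.cases (c₀ - m) (fun j => -d j) : Fin (k+1) → Q) i * g i) = 0 := by
          rw [Fin.sum_univ_succ]
          simp only [Fin.cases_zero, Fin.cases_succ, neg_mul, Finset.sum_neg_distrib]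
          linear_combination -hd - hyz
        rw [this]
        exact Submodule.zero_mem _
      have := hmin _ hzero 0
      simp only [Fin.cases_zero] at this
      have : c₀ - m + m ∈ 𝔫 := Ideal.add_mem _ this hm
      simpa using this
end

section
/- Let (Q, 𝔫) be a regular local ring with residue field k, let 𝔤 ⊆ 𝔫² be an 𝔫-primary ideal minimally generated by g_0, …, g_k, and set 𝔞 = 𝔫·g_0 + (g_1, …, g_k). Then the type of Q/𝔞 is at most the type of Q/𝔤 plus 1, i.e., dim_k Soc(Q/𝔞) ≤ dim_k Soc(Q/𝔤) + 1. -/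
open Submodule IsLocalRing

/-- A submodule of a cyclic module whose generator is killed by the maximal ideal of a
local ring is spanned by a single element. -/
lemma TrimAux.cyclic_sub {R M : Type*} [CommRing R] [IsLocalRing R] [AddCommGroup M]
    [Module R M] (x : M) (hx : ∀ m ∈ maximalIdeal R, m • x = 0) (W : Submodule R M) :
    ∃ z ∈ W, W ⊓ span R {x} = span R {z} := by
  by_cases h : W ⊓ span R {x} = ⊥
  · exact ⟨0, W.zero_mem, by simp [h]⟩
  · obtain ⟨y, hy, hy0⟩ := Submodule.exists_mem_ne_zero_of_ne_bot h
    obtain ⟨c, rfl⟩ := mem_span_singleton.mp hy.2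
    have hc : IsUnit c := by
      by_contra hc
      exact hy0 (hx c ((mem_maximalIdeal c).mpr hc))
    refine ⟨c • x, hy.1, le_antisymm ?_ ?_⟩
    · calc W ⊓ span R {x} ≤ span R {x} := inf_le_right
        _ = span R {c • x} := (span_singleton_smul_eq hc x).symm
    · rw [span_le, Set.singleton_subset_iff]
      exact hy

/-- Over a local ring, a submodule of a module spanned by `t` elements each killed by
the maximal ideal is spanned by `t` of its own elements. -/
lemma TrimAux.span_bound {R : Type*} [CommRing R] [IsLocalRing R] :
    ∀ (t : ℕ) {M : Type*} [AddCommGroup M] [Module R M] (s : Fin t → M),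
    (∀ i, ∀ m ∈ maximalIdeal R, m • s i = 0) →
    ∀ W : Submodule R M, W ≤ span R (Set.range s) →
    ∃ w : Fin t → M, (∀ i, w i ∈ W) ∧ W = span R (Set.range w)
  | 0, M, _, _, s, hs, W, hW => by
    refine ⟨fun i => i.elim0, fun i => i.elim0, le_antisymm ?_ ?_⟩
    · simpa [Set.range_eq_empty] using hW
    · simp [Set.range_eq_empty]
  | (t+1), M, _, _, s, hs, W, hW => by
    set N : Submodule R M := span R {s 0} with hN
    set q := N.mkQ with hq
    have hker : ∀ y : M, q y = 0 ↔ y ∈ N := fun y => by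
      simp [hq, Submodule.Quotient.mk_eq_zero]
    have hs' : ∀ i : Fin t, ∀ m ∈ maximalIdeal R, m • q (s i.succ) = 0 := by
      intro i m hm
      rw [← map_smul, hs i.succ m hm, map_zero]
    have hW' : W.map q ≤ span R (Set.range fun i : Fin t => q (s i.succ)) := by
      refine (Submodule.map_mono hW).trans ?_
      rw [Submodule.map_span]
      refine span_le.mpr ?_
      rintro _ ⟨_, ⟨i, rfl⟩, rfl⟩
      rcases Fin.eq_zero_or_eq_succ i with h0 | ⟨j, rfl⟩
      · subst h0
        have : q (s 0) = 0 := (hker _).mpr (subset_span rfl)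
        simp [this]
      · exact subset_span ⟨j, rfl⟩
    obtain ⟨w', hw'mem, hw'span⟩ := TrimAux.span_bound t _ hs' (W.map q) hW'
    choose u hu hqu using fun i : Fin t => hw'mem i
    obtain ⟨z, hzW, hz⟩ := TrimAux.cyclic_sub (s 0) (hs 0) W
    refine ⟨Fin.cons z u, ?_, le_antisymm ?_ ?_⟩
    · intro i
      rcases Fin.eq_zero_or_eq_succ i with h0 | ⟨j, rfl⟩
      · subst h0; simpa using hzW
      · simpa using hu j
    · intro x hx
      have hqx : q x ∈ W.map q := ⟨x, hx, rfl⟩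
      rw [hw'span, mem_span_range_iff_exists_fun] at hqx
      obtain ⟨c, hc⟩ := hqx
      have hd : x - ∑ i, c i • u i ∈ W ⊓ N := by
        constructor
        · exact W.sub_mem hx (sum_mem fun i _ => W.smul_mem _ (hu i))
        · show _ ∈ N
          rw [← hker, map_sub, map_sum]
          simp only [map_smul, hqu, hc]
          simp
      rw [hz, mem_span_singleton] at hd
      obtain ⟨a, ha⟩ := hd
      rw [mem_span_range_iff_exists_fun]
      refine ⟨Fin.cons a c, ?_⟩
      rw [Fin.sum_univ_succ]
      simp only [Fin.cons_succ, Fin.cons_zero]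
      rw [ha]
      abel
    · rw [span_le]
      rintro _ ⟨i, rfl⟩
      rcases Fin.eq_zero_or_eq_succ i with h0 | ⟨j, rfl⟩
      · subst h0; simpa using hzW
      · simpa using hu j

lemma TrimAux.mem_quotSocle {Q : Type*} [CommRing Q] (𝔫 𝔟 : Ideal Q) (x : Q) :
    Ideal.Quotient.mk 𝔟 x ∈ quotSocle 𝔫 𝔟 ↔ ∀ n ∈ 𝔫, x * n ∈ 𝔟 := by
  rw [quotSocle, Submodule.mem_annihilator]
  constructor
  · intro h n hn
    have := h (Ideal.Quotient.mk 𝔟 n) (Ideal.mem_map_of_mem _ hn)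
    rwa [smul_eq_mul, ← map_mul, Ideal.Quotient.eq_zero_iff_mem] at this
  · intro h m hm
    obtain ⟨n, hn, rfl⟩ := Ideal.mem_map_iff_of_surjective _ Ideal.Quotient.mk_surjective
      |>.mp hm
    rw [smul_eq_mul, ← map_mul, Ideal.Quotient.eq_zero_iff_mem]
    exact h n hn

/-- Let `(Q, 𝔫)` be a regular local ring with residue field `k`, let `𝔤 ⊆ 𝔫²` be an
`𝔫`-primary ideal minimally generated by `g 0, …, g k`, and set
`𝔞 = 𝔫·g 0 + (g 1, …, g k)`.  Then `dim_k Soc(Q ⧸ 𝔞) ≤ dim_k Soc(Q ⧸ 𝔤) + 1`,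
i.e. whenever the socle of `Q ⧸ 𝔤` is spanned (over the residue field `k`) by `t`
elements, the socle of `Q ⧸ 𝔞` is spanned by `t + 1` elements. -/
theorem trimmed_ideal_type_le {Q : Type*} [CommRing Q] [IsLocalRing Q]
    (hreg : IsRegularLocal Q)
    (𝔫 : Ideal Q) (h𝔫 : 𝔫 = IsLocalRing.maximalIdeal Q)
    (𝔤 : Ideal Q) (h𝔤𝔫 : 𝔤 ≤ 𝔫 ^ 2) (h𝔤prim : 𝔤.radical = 𝔫)
    (k : ℕ) (g : Fin (k + 1) → Q)
    (hgen : Ideal.span (Set.range g) = 𝔤)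
    (hmin : ∀ c : Fin (k + 1) → Q, (∑ i, c i * g i) ∈ 𝔫 * 𝔤 → ∀ i, c i ∈ 𝔫)
    (𝔞 : Ideal Q)
    (h𝔞 : 𝔞 = 𝔫 * Ideal.span {g 0} ⊔ Ideal.span (Set.range fun i : Fin k => g i.succ)) :
    ∀ (t : ℕ) (s : Fin t → Q),
      quotSocle 𝔫 𝔤 = Ideal.span (Set.range fun i => Ideal.Quotient.mk 𝔤 (s i)) →
      ∃ v : Fin (t + 1) → Q,
        quotSocle 𝔫 𝔞 = Ideal.span (Set.range fun i => Ideal.Quotient.mk 𝔞 (v i)) := by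
  intro t s hsoc
  have hg𝔤 : ∀ j, g j ∈ 𝔤 := fun j => hgen ▸ Ideal.subset_span ⟨j, rfl⟩
  have h𝔞𝔤 : 𝔞 ≤ 𝔤 := by
    rw [h𝔞, sup_le_iff]
    constructor
    · exact le_trans Ideal.mul_le_right (by
        rw [Ideal.span_le, Set.singleton_subset_iff]; exact hg𝔤 0)
    · rw [Ideal.span_le]
      rintro _ ⟨j, rfl⟩
      exact hg𝔤 j.succ
  have hg0soc : ∀ n ∈ 𝔫, g 0 * n ∈ 𝔞 := by
    intro n hn
    rw [h𝔞]
    exact Ideal.mem_sup_left (by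
      rw [mul_comm (g 0) n]
      exact Ideal.mul_mem_mul hn (Ideal.subset_span rfl))
  have h𝔤sub : 𝔤 ≤ Ideal.span {g 0} ⊔ 𝔞 := by
    rw [← hgen, Ideal.span_le]
    rintro _ ⟨j, rfl⟩
    rcases Fin.eq_zero_or_eq_succ j with h0 | ⟨j', rfl⟩
    · subst h0; exact Ideal.mem_sup_left (Ideal.subset_span rfl)
    · exact Ideal.mem_sup_right (h𝔞 ▸ Ideal.mem_sup_right (Ideal.subset_span ⟨j', rfl⟩))
  -- the images of the `s i` in `Q ⧸ 𝔤` are killed by the maximal ideal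
  have hsi : ∀ i, ∀ n ∈ 𝔫, s i * n ∈ 𝔤 := fun i =>
    (TrimAux.mem_quotSocle 𝔫 𝔤 (s i)).mp (hsoc ▸ Ideal.subset_span ⟨i, rfl⟩)
  have hskill : ∀ i, ∀ m ∈ maximalIdeal Q, m • (Ideal.Quotient.mk 𝔤 (s i)) = 0 := by
    intro i m hm
    rw [Algebra.smul_def, Ideal.Quotient.algebraMap_eq, ← map_mul,
      Ideal.Quotient.eq_zero_iff_mem, mul_comm]
    exact hsi i m (h𝔫 ▸ hm)
  -- the image of the socle of `Q ⧸ 𝔞` inside `Q ⧸ 𝔤`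
  let W : Submodule Q (Q ⧸ 𝔤) :=
    { carrier := {y | ∃ x : Q, Ideal.Quotient.mk 𝔤 x = y ∧
        Ideal.Quotient.mk 𝔞 x ∈ quotSocle 𝔫 𝔞}
      zero_mem' := ⟨0, by simp, by rw [map_zero]; exact zero_mem _⟩
      add_mem' := by
        rintro y₁ y₂ ⟨x₁, rfl, h₁⟩ ⟨x₂, rfl, h₂⟩
        exact ⟨x₁ + x₂, by rw [map_add], by rw [map_add]; exact add_mem h₁ h₂⟩
      smul_mem' := by
        rintro c y ⟨x, rfl, h⟩
        exact ⟨c * x, by rw [map_mul, ← Ideal.Quotient.algebraMap_eq, ← Algebra.smul_def],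
          by rw [map_mul]; exact Ideal.mul_mem_left _ _ h⟩ }
  have hWle : W ≤ span Q (Set.range fun i => Ideal.Quotient.mk 𝔤 (s i)) := by
    rintro y ⟨x, rfl, hx⟩
    have hx𝔤 : Ideal.Quotient.mk 𝔤 x ∈ quotSocle 𝔫 𝔤 :=
      (TrimAux.mem_quotSocle 𝔫 𝔤 x).mpr
        (fun n hn => h𝔞𝔤 ((TrimAux.mem_quotSocle 𝔫 𝔞 x).mp hx n hn))
    rw [hsoc] at hx𝔤
    have hsurj : Function.Surjective (algebraMap Q (Q ⧸ 𝔤)) := by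
      rw [Ideal.Quotient.algebraMap_eq]; exact Ideal.Quotient.mk_surjective
    rw [← Submodule.restrictScalars_span Q (Q ⧸ 𝔤) hsurj]
    exact hx𝔤
  obtain ⟨w, hwW, hwspan⟩ :=
    TrimAux.span_bound t (fun i => Ideal.Quotient.mk 𝔤 (s i)) hskill W hWle
  have hex : ∀ i, ∃ x : Q, Ideal.Quotient.mk 𝔤 x = w i ∧
      Ideal.Quotient.mk 𝔞 x ∈ quotSocle 𝔫 𝔞 := fun i => hwW i
  choose u hu hus using hex
  refine ⟨Fin.cons (g 0) u, le_antisymm ?_ ?_⟩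
  · -- the socle is contained in the span of the chosen elements
    intro ξ hξ
    obtain ⟨x, rfl⟩ := Ideal.Quotient.mk_surjective ξ
    have hxW : Ideal.Quotient.mk 𝔤 x ∈ W := ⟨x, rfl, hξ⟩
    rw [hwspan, mem_span_range_iff_exists_fun] at hxW
    obtain ⟨c, hc⟩ := hxW
    have hsum : (∑ i, c i • w i) = Ideal.Quotient.mk 𝔤 (∑ i, c i * u i) := by
      rw [map_sum]
      exact Finset.sum_congr rfl fun i _ => by
        rw [← hu i, Algebra.smul_def, Ideal.Quotient.algebraMap_eq, ← map_mul]
    have hmem𝔤 : x - ∑ i, c i * u i ∈ 𝔤 := by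
      rw [← Ideal.Quotient.eq_zero_iff_mem, map_sub, ← hsum, hc, sub_self]
    have hmem := h𝔤sub hmem𝔤
    rw [Submodule.mem_sup] at hmem
    obtain ⟨y, hy, z, hz, hyz⟩ := hmem
    obtain ⟨a, ha⟩ := Ideal.mem_span_singleton'.mp hy
    rw [← Ideal.submodule_span_eq, mem_span_range_iff_exists_fun]
    refine ⟨Fin.cons (Ideal.Quotient.mk 𝔞 a) (fun j => Ideal.Quotient.mk 𝔞 (c j)), ?_⟩
    rw [Fin.sum_univ_succ]
    simp only [Fin.cons_succ, Fin.cons_zero, smul_eq_mul, ← map_mul]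
    rw [← map_sum, ← map_add, Ideal.Quotient.mk_eq_mk_iff_sub_mem]
    have heq : a * g 0 + (∑ j, c j * u j) - x = -z := by
      rw [ha]
      linear_combination hyz
    rw [heq]
    exact neg_mem hz
  · -- each chosen element lies in the socle
    rw [Ideal.span_le]
    rintro _ ⟨i, rfl⟩
    rcases Fin.eq_zero_or_eq_succ i with h0 | ⟨j, rfl⟩
    · subst h0
      simp only [Fin.cons_zero]
      exact (TrimAux.mem_quotSocle 𝔫 𝔞 (g 0)).mpr hg0soc
    · simpa using hus j
end

section
/- Let Q = k[[x,y,z]] be the power series ring in three variables over a field k and let m ≥ 2. Then the elements x^m, y^m, d_m form a Q-regular sequence, where d_m = det(U_m). -/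
section Helpers

open MvPowerSeries Finsupp

variable {R : Type*} [CommRing R]

local notation "Q" => MvPowerSeries (Fin 3) R

open Classical in
/-- restriction of a power series to exponents satisfying `P`. -/
noncomputable def restrictSupp (P : (Fin 3 →₀ ℕ) → Prop) (f : Q) : Q :=
  fun e => if P e then MvPowerSeries.coeff (R := R) e f else 0

open Classical in
lemma coeff_restrictSupp (P : (Fin 3 →₀ ℕ) → Prop) (f : Q) (e : Fin 3 →₀ ℕ) :
    MvPowerSeries.coeff (R := R) e (restrictSupp P f)
      = if P e then MvPowerSeries.coeff (R := R) e f else 0 :=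
  rfl

lemma restrictSupp_add_compl (P : (Fin 3 →₀ ℕ) → Prop) (f : Q) :
    restrictSupp P f + restrictSupp (fun e => ¬ P e) f = f := by
  classical
  ext e
  simp only [map_add, coeff_restrictSupp]
  by_cases h : P e <;> simp [h]

lemma coeff_X_pow_mul' (s : Fin 3) (p : ℕ) (w : Q) (e : Fin 3 →₀ ℕ) :
    MvPowerSeries.coeff (R := R) e ((X s : Q) ^ p * w)
      = if p ≤ e s then MvPowerSeries.coeff (R := R) (e - single s p) w else 0 := by
  rw [X_pow_eq, coeff_monomial_mul]
  simp only [single_le_iff, one_mul]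

lemma coeff_add_X_pow_mul (s : Fin 3) (p : ℕ) (w : Q) (e : Fin 3 →₀ ℕ) :
    MvPowerSeries.coeff (R := R) (single s p + e) ((X s : Q) ^ p * w)
      = MvPowerSeries.coeff (R := R) e w := by
  rw [X_pow_eq, coeff_add_monomial_mul, one_mul]

lemma mem_pow_span_of_coeff (n : ℕ) (f : Q)
    (h : ∀ e, MvPowerSeries.coeff (R := R) e f ≠ 0 → n ≤ e 0 + e 1) :
    f ∈ (Ideal.span {(X 0 : Q), X 1}) ^ n := by
  classical
  induction n generalizing f with
  | zero => simp
  | succ n ih =>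
    have h₁ : (X 1 : Q) ^ (n+1) ∣ restrictSupp (fun e => e 0 = 0) f := by
      rw [X_pow_dvd_iff]
      intro e he
      rw [coeff_restrictSupp]
      split_ifs with h0
      all_goals first
        | rfl
        | (by_contra hne
           have := h e hne
           omega)
    have h₂ : (X 0 : Q) ∣ restrictSupp (fun e => ¬ e 0 = 0) f := by
      rw [X_dvd_iff]
      intro e he
      rw [coeff_restrictSupp, if_neg (by simpa using he)]
    obtain ⟨v, hv⟩ := h₁
    obtain ⟨w, hw⟩ := h₂
    have hw' : ∀ e, MvPowerSeries.coeff (R := R) e w ≠ 0 → n ≤ e 0 + e 1 := by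
      intro e he
      have key : MvPowerSeries.coeff (R := R) (single 0 1 + e) (restrictSupp (fun e => ¬ e 0 = 0) f)
          = MvPowerSeries.coeff (R := R) e w := by
        rw [hw, ← pow_one (X 0 : Q), coeff_add_X_pow_mul]
      rw [coeff_restrictSupp,
        if_pos (show ¬ (single (0:Fin 3) 1 + e : Fin 3 →₀ ℕ) 0 = 0 by simp)] at key
      have hne : MvPowerSeries.coeff (R := R) (single (0:Fin 3) 1 + e) f ≠ 0 := by
        rw [key]; exact he
      have := h _ hne
      have h0 : (single (0 : Fin 3) 1 + e : Fin 3 →₀ ℕ) 0 = 1 + e 0 := by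
        simp [Finsupp.add_apply]
      have h1 : (single (0 : Fin 3) 1 + e : Fin 3 →₀ ℕ) 1 = e 1 := by
        simp [Finsupp.add_apply, Finsupp.single_apply]
      omega
    rw [← restrictSupp_add_compl (fun e => e 0 = 0) f, hv, hw, pow_succ']
    refine add_mem ?_ (Submodule.mul_mem_mul (Ideal.subset_span (by simp)) (ih w hw'))
    refine Ideal.mul_mem_right _ _ ?_
    rw [show ((X 1 : Q)) ^ (n+1) = X 1 * (X 1)^n by rw [pow_succ']]
    exact Submodule.mul_mem_mul (Ideal.subset_span (by simp))
      (Ideal.pow_mem_pow (Ideal.subset_span (by simp)) n)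

lemma mem_span_pow_pow_of_coeff (m : ℕ) (f : Q)
    (h : ∀ e, MvPowerSeries.coeff (R := R) e f ≠ 0 → m ≤ e 0 ∨ m ≤ e 1) :
    f ∈ Ideal.span {(X 0 : Q) ^ m, (X 1 : Q) ^ m} := by
  classical
  have h₁ : (X 0 : Q) ^ m ∣ restrictSupp (fun e => m ≤ e 0) f := by
    rw [X_pow_dvd_iff]
    intro e he
    rw [coeff_restrictSupp, if_neg (by omega)]
  have h₂ : (X 1 : Q) ^ m ∣ restrictSupp (fun e => ¬ m ≤ e 0) f := by
    rw [X_pow_dvd_iff]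
    intro e he
    rw [coeff_restrictSupp]
    split_ifs with hc
    all_goals first
      | rfl
      | (by_contra hne
         rcases h e hne with h' | h' <;> omega)
  obtain ⟨v, hv⟩ := h₁
  obtain ⟨w, hw⟩ := h₂
  rw [← restrictSupp_add_compl (fun e => m ≤ e 0) f, hv, hw]
  exact add_mem (Ideal.mul_mem_right _ _ (Ideal.subset_span (by simp)))
    (Ideal.mul_mem_right _ _ (Ideal.subset_span (by simp)))

lemma coeff_eq_zero_of_mem_pow :
    ∀ (n : ℕ) (f : Q), f ∈ (Ideal.span {(X 0 : Q), X 1}) ^ n →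
      ∀ e : Fin 3 →₀ ℕ, e 0 + e 1 < n → MvPowerSeries.coeff (R := R) e f = 0 := by
  intro n
  induction n with
  | zero => intro f _ e he; exact absurd he (Nat.not_lt_zero _)
  | succ n ih =>
    intro f hf
    rw [pow_succ'] at hf
    refine Submodule.mul_induction_on hf ?_ ?_
    · intro a ha b hb e he
      obtain ⟨p, q, hpq⟩ := Ideal.mem_span_pair.mp ha
      have key : ∀ s : Fin 3, s = 0 ∨ s = 1 → ∀ v : Q,
          v ∈ (Ideal.span {(X 0 : Q), X 1}) ^ n →
          MvPowerSeries.coeff (R := R) e ((X s : Q) * v) = 0 := by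
        intro s hs v hv
        rw [← pow_one (X s : Q), coeff_X_pow_mul']
        split_ifs with hle
        · apply ih v hv
          have t0 : (e - single s 1 : Fin 3 →₀ ℕ) 0 = e 0 - (single s 1 : Fin 3 →₀ ℕ) 0 :=
            Finsupp.tsub_apply _ _ _
          have t1 : (e - single s 1 : Fin 3 →₀ ℕ) 1 = e 1 - (single s 1 : Fin 3 →₀ ℕ) 1 :=
            Finsupp.tsub_apply _ _ _
          rcases hs with rfl | rfl <;>
            simp only [t0, t1, Finsupp.single_eq_same, Finsupp.single_apply] <;>
            · norm_num
              omega
        · rfl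
      rw [← hpq, add_mul, map_add,
        show p * X 0 * b = X 0 * (p * b) by ring,
        show q * X 1 * b = X 1 * (q * b) by ring,
        key 0 (Or.inl rfl) _ (Ideal.mul_mem_left _ p hb),
        key 1 (Or.inr rfl) _ (Ideal.mul_mem_left _ q hb), add_zero]
    · intro g h hg hh e he
      rw [map_add, hg e he, hh e he, add_zero]

lemma coeff_eq_zero_of_mem_J (m n : ℕ) (f : Q)
    (hf : f ∈ Ideal.span {(X 0 : Q) ^ m, (X 1 : Q) ^ m} ⊔ (Ideal.span {(X 0 : Q), X 1}) ^ n)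
    (e : Fin 3 →₀ ℕ) (h0 : e 0 < m) (h1 : e 1 < m) (h01 : e 0 + e 1 < n) :
    MvPowerSeries.coeff (R := R) e f = 0 := by
  obtain ⟨a, ha, b, hb, rfl⟩ := Submodule.mem_sup.mp hf
  rw [map_add, coeff_eq_zero_of_mem_pow n b hb e h01, add_zero]
  obtain ⟨p, q, hpq⟩ := Ideal.mem_span_pair.mp ha
  rw [← hpq, map_add,
    show p * (X 0 : Q)^m = (X 0 : Q)^m * p by ring,
    show q * (X 1 : Q)^m = (X 1 : Q)^m * q by ring,
    coeff_X_pow_mul', coeff_X_pow_mul', if_neg (by omega), if_neg (by omega), add_zero]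

lemma mem_J_of_coeff (m n : ℕ) (f : Q)
    (h : ∀ e, MvPowerSeries.coeff (R := R) e f ≠ 0 → m ≤ e 0 ∨ m ≤ e 1 ∨ n ≤ e 0 + e 1) :
    f ∈ Ideal.span {(X 0 : Q) ^ m, (X 1 : Q) ^ m} ⊔ (Ideal.span {(X 0 : Q), X 1}) ^ n := by
  classical
  rw [← restrictSupp_add_compl (fun e => m ≤ e 0 ∨ m ≤ e 1) f]
  refine add_mem (Submodule.mem_sup_left (mem_span_pow_pow_of_coeff m _ ?_))
    (Submodule.mem_sup_right (mem_pow_span_of_coeff n _ ?_)) <;>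
  · intro e he
    rw [coeff_restrictSupp] at he
    split_ifs at he with hc
    all_goals first
      | exact absurd rfl he
      | exact hc
      | (push_neg at hc
         rcases h e he with h' | h' | h' <;> omega)

/-- The tridiagonal companion matrix of `Umat` (columns reversed). -/
def Tmat (x y z : R) (m : ℕ) : Matrix (Fin m) (Fin m) R :=
  Matrix.of fun i j =>
    if (i : ℕ) = (j : ℕ) + 1 then y
    else if (i : ℕ) = (j : ℕ) then z
    else if (i : ℕ) + 1 = (j : ℕ) then x
    else 0

lemma Tmat_submatrix_succ (x y z : R) (m : ℕ) :
    (Tmat x y z (m+1)).submatrix Fin.succ Fin.succ = Tmat x y z m := by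
  ext i j
  simp only [Tmat, Matrix.submatrix_apply, Matrix.of_apply, Fin.val_succ]
  split_ifs <;> first | rfl | omega

lemma Tmat_submatrix_succ_succ (x y z : R) (m : ℕ) :
    ((Tmat x y z (m+2)).submatrix Fin.succ (Fin.succAbove 1)).submatrix
        (Fin.succAbove 0) Fin.succ = Tmat x y z m := by
  ext i j
  have h1 : ((1 : Fin (m+2)).succAbove j.succ : ℕ) = (j : ℕ) + 2 := by
    rw [Fin.one_succAbove_succ]; simp
  simp only [Matrix.submatrix_apply, Fin.succAbove_zero, Tmat, Matrix.of_apply,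
    Fin.val_succ, h1]
  split_ifs <;> first | rfl | omega

lemma det_Tmat_rec (x y z : R) (n : ℕ) :
    (Tmat x y z (n+2)).det
      = z * (Tmat x y z (n+1)).det - x * (y * (Tmat x y z n).det) := by
  have e00 : Tmat x y z (n+2) 0 0 = z := by
    simp [Tmat]
  have e01 : Tmat x y z (n+2) 0 (Fin.succ 0) = x := by
    simp [Tmat, Fin.val_succ]
  have tail : ∀ j : Fin n, Tmat x y z (n+2) 0 j.succ.succ = 0 := by
    intro j
    simp only [Tmat, Matrix.of_apply, Fin.val_succ, Fin.val_zero]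
    split_ifs <;> first | rfl | (simp_all <;> omega)
  have hA : (Tmat x y z (n+2)).submatrix Fin.succ ((0 : Fin (n+2)).succAbove)
      = Tmat x y z (n+1) := by
    rw [Fin.succAbove_zero, Tmat_submatrix_succ]
  have hB : ((Tmat x y z (n+2)).submatrix Fin.succ ((Fin.succ (0 : Fin (n+1))).succAbove)).det
      = y * (Tmat x y z n).det := by
    rw [Fin.succ_zero_eq_one, Matrix.det_succ_column_zero, Fin.sum_univ_succ]
    have b00 : (Tmat x y z (n+2)).submatrix Fin.succ ((1 : Fin (n+2)).succAbove) 0 0 = y := by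
      simp only [Matrix.submatrix_apply, Fin.one_succAbove_zero]
      simp [Tmat, Fin.val_succ]
    have btail : ∀ i : Fin n,
        (Tmat x y z (n+2)).submatrix Fin.succ ((1 : Fin (n+2)).succAbove) i.succ 0 = 0 := by
      intro i
      simp only [Matrix.submatrix_apply, Fin.one_succAbove_zero, Tmat, Matrix.of_apply,
        Fin.val_succ, Fin.val_zero]
      split_ifs <;> first | rfl | (simp_all <;> omega)
    rw [Finset.sum_eq_zero (fun i _ => by rw [btail i, mul_zero, zero_mul]), add_zero,
      b00, Tmat_submatrix_succ_succ]
    simp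
  rw [Matrix.det_succ_row_zero, Fin.sum_univ_succ, Fin.sum_univ_succ,
    Finset.sum_eq_zero (fun j _ => by rw [tail j, mul_zero, zero_mul]), add_zero,
    e00, e01, hA, hB]
  simp [Fin.val_succ]
  ring

lemma det_Tmat (x y z : R) (m : ℕ) :
    ∃ c : R, (Tmat x y z m).det = z ^ m + x * y * c := by
  suffices H : ∀ n : ℕ, (∃ c : R, (Tmat x y z n).det = z ^ n + x * y * c) ∧
      (∃ c : R, (Tmat x y z (n+1)).det = z ^ (n+1) + x * y * c) from (H m).1
  intro n
  induction n with
  | zero =>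
    refine ⟨⟨0, by simp⟩, ⟨0, ?_⟩⟩
    rw [show (Tmat x y z 1).det = Tmat x y z 1 0 0 from Matrix.det_fin_one _]
    simp [Tmat]
  | succ n ih =>
    refine ⟨ih.2, ?_⟩
    obtain ⟨c1, h1⟩ := ih.2
    obtain ⟨c2, h2⟩ := ih.1
    refine ⟨z * c1 - z ^ n - x * y * c2, ?_⟩
    rw [det_Tmat_rec, h1, h2]
    ring

lemma Umat_eq_submatrix (x y z : R) (m : ℕ) :
    Umat x y z m = (Tmat x y z m).submatrix id Fin.revPerm := by
  ext i j
  have hi := i.isLt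
  have hj := j.isLt
  have hrev : ((Fin.revPerm j : Fin m) : ℕ) = m - ((j : ℕ) + 1) := by
    simp [Fin.revPerm, Fin.val_rev]
  simp only [Umat, Tmat, Matrix.submatrix_apply, Matrix.of_apply, id_eq, hrev]
  split_ifs <;> first | rfl | omega

lemma det_Umat (x y z : R) (m : ℕ) :
    ∃ ε c : R, ε * ε = 1 ∧ (Umat x y z m).det = ε * (z ^ m + x * y * c) := by
  obtain ⟨c, hc⟩ := det_Tmat x y z m
  refine ⟨((Equiv.Perm.sign (Fin.revPerm : Equiv.Perm (Fin m)) : ℤ) : R), c, ?_, ?_⟩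
  · rw [← Int.cast_mul, ← Units.val_mul, Int.units_mul_self]
    simp
  · rw [Umat_eq_submatrix, Matrix.det_permute', hc]

lemma isSMulRegular_quot_of {N : Submodule Q Q} {r : Q}
    (h : ∀ f, r * f ∈ N → f ∈ N) : IsSMulRegular (Q ⧸ N) r := by
  intro a b hab
  obtain ⟨a, rfl⟩ := Submodule.Quotient.mk_surjective N a
  obtain ⟨b, rfl⟩ := Submodule.Quotient.mk_surjective N b
  simp only [← Submodule.Quotient.mk_smul] at hab
  rw [Submodule.Quotient.eq] at hab ⊢
  exact h (a - b) (by rw [mul_sub]; simpa [smul_eq_mul] using hab)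

end Helpers

/-- In `Q = k[[x,y,z]]` with `m ≥ 2`, the elements `x^m, y^m, d_m` form a
`Q`-regular sequence. -/
theorem pow_pow_dSeq_isRegular {k : Type*} [Field k] (m : ℕ) (hm : 2 ≤ m)
    (x y z : MvPowerSeries (Fin 3) k)
    (hx : x = MvPowerSeries.X 0) (hy : y = MvPowerSeries.X 1)
    (hz : z = MvPowerSeries.X 2) :
    RingTheory.Sequence.IsRegular (MvPowerSeries (Fin 3) k)
      [x ^ m, y ^ m, dSeq x y z m] := by
  subst hx hy hz
  set Q := MvPowerSeries (Fin 3) k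
  set X : Fin 3 → Q := fun s => MvPowerSeries.X s with hX
  set d : Q := dSeq (X 0) (X 1) (X 2) m with hd
  -- the key ingredient about `d`
  obtain ⟨ε, c, hε, hdet⟩ := det_Umat (X 0) (X 1) (X 2) m
  rw [RingTheory.Sequence.isRegular_iff]
  have hKd : ∀ f : Q, d * f ∈ Ideal.span {X 0 ^ m, X 1 ^ m} →
      f ∈ Ideal.span {X 0 ^ m, X 1 ^ m} := by
    intro f hdf
    have hzf : (X 2) ^ m * f = ε * (d * f) - X 0 * X 1 * (c * f) := by
      have : d = ε * ((X 2) ^ m + X 0 * X 1 * c) := hdet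
      calc (X 2) ^ m * f = (ε * ε) * ((X 2) ^ m * f) := by rw [hε, one_mul]
        _ = ε * ((ε * ((X 2) ^ m + X 0 * X 1 * c)) * f)
              - (ε * ε) * (X 0 * X 1 * (c * f)) := by ring
        _ = ε * (d * f) - X 0 * X 1 * (c * f) := by rw [← this, hε, one_mul]
    have mem : ∀ j : ℕ, f ∈ Ideal.span {X 0 ^ m, X 1 ^ m}
        ⊔ (Ideal.span {X 0, X 1}) ^ j := by
      intro j
      induction j with
      | zero =>
        rw [pow_zero, Ideal.one_eq_top]
        exact Submodule.mem_sup_right Submodule.mem_top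
      | succ j ihj =>
        have hzfJ : (X 2) ^ m * f ∈ Ideal.span {X 0 ^ m, X 1 ^ m}
            ⊔ (Ideal.span {X 0, X 1}) ^ (j+1) := by
          rw [hzf]
          apply sub_mem
          · exact Submodule.mem_sup_left (Ideal.mul_mem_left _ ε hdf)
          · obtain ⟨a, haK, b, hbI, hab⟩ := Submodule.mem_sup.mp ihj
            have hsplit : X 0 * X 1 * (c * f)
                = X 0 * X 1 * c * a + X 0 * (X 1 * (c * b)) := by
              rw [← hab]; ring
            rw [hsplit]
            refine add_mem (Submodule.mem_sup_left (Ideal.mul_mem_left _ (X 0 * X 1 * c) haK))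
              (Submodule.mem_sup_right ?_)
            rw [pow_succ']
            exact Submodule.mul_mem_mul (Ideal.subset_span (by simp))
              (Ideal.mul_mem_left _ _ (Ideal.mul_mem_left _ _ hbI))
        apply mem_J_of_coeff m (j+1)
        intro e he
        by_contra hcon
        push_neg at hcon
        obtain ⟨h0, h1, h01⟩ := hcon
        have coords0 : (Finsupp.single (2:Fin 3) m + e : Fin 3 →₀ ℕ) 0 = e 0 := by
          simp [Finsupp.single_apply]
        have coords1 : (Finsupp.single (2:Fin 3) m + e : Fin 3 →₀ ℕ) 1 = e 1 := by
          simp [Finsupp.single_apply]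
        have h2 := coeff_eq_zero_of_mem_J m (j+1) _ hzfJ (Finsupp.single 2 m + e)
          (by rw [coords0]; omega) (by rw [coords1]; omega)
          (by rw [coords0, coords1]; omega)
        rw [coeff_add_X_pow_mul] at h2
        exact he h2
    have hfin := mem (2*m)
    apply mem_span_pow_pow_of_coeff
    intro e he
    by_contra hcon
    push_neg at hcon
    exact he (coeff_eq_zero_of_mem_J m (2*m) f hfin e hcon.1 hcon.2 (by omega))
  constructor
  · rw [RingTheory.Sequence.isWeaklyRegular_iff]
    intro i hi
    simp only [List.length_cons, List.length_nil] at hi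
    interval_cases i
    · -- x^m is a nonzerodivisor
      simp only [List.take_zero, List.getElem_cons_zero]
      apply isSMulRegular_quot_of
      intro f hf
      rw [Ideal.ofList_nil, Submodule.bot_smul] at hf ⊢
      rw [Submodule.mem_bot] at hf ⊢
      ext e
      have := congrArg (MvPowerSeries.coeff (R := k) (Finsupp.single 0 m + e)) hf
      rw [coeff_add_X_pow_mul] at this
      simpa using this
    · -- y^m mod x^m
      have hN : (Ideal.ofList ([X 0 ^ m, X 1 ^ m, d].take 1) • ⊤ : Submodule Q Q)
          = Ideal.span {X 0 ^ m} := by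
        rw [show ([X 0 ^ m, X 1 ^ m, d].take 1) = [X 0 ^ m] from rfl,
          Ideal.ofList_singleton, Ideal.smul_eq_mul, Ideal.mul_top]
      simp only [List.getElem_cons_succ, List.getElem_cons_zero]
      rw [hN]
      apply isSMulRegular_quot_of
      intro f hf
      rw [Ideal.mem_span_singleton] at hf ⊢
      obtain ⟨g, hg⟩ := hf
      rw [MvPowerSeries.X_pow_dvd_iff]
      intro e he
      have key := congrArg (MvPowerSeries.coeff (R := k) (Finsupp.single 1 m + e)) hg
      rw [coeff_add_X_pow_mul, coeff_X_pow_mul'] at key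
      rw [key, if_neg]
      simp only [Finsupp.add_apply, Finsupp.single_apply]
      norm_num
      omega
    · -- d mod (x^m, y^m)
      have hN : (Ideal.ofList ([X 0 ^ m, X 1 ^ m, d].take 2) • ⊤ : Submodule Q Q)
          = Ideal.span {X 0 ^ m, X 1 ^ m} := by
        rw [show ([X 0 ^ m, X 1 ^ m, d].take 2) = [X 0 ^ m, X 1 ^ m] from rfl,
          Ideal.ofList_cons, Ideal.ofList_singleton, ← Ideal.span_insert,
          Ideal.smul_eq_mul, Ideal.mul_top]
      simp only [List.getElem_cons_succ, List.getElem_cons_zero]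
      rw [hN]
      exact isSMulRegular_quot_of hKd
  · -- the ideal is proper
    rw [Ideal.smul_eq_mul, Ideal.mul_top]
    intro htop
    have h1 : (1 : Q) ∈ Ideal.ofList [X 0 ^ m, X 1 ^ m, d] := by
      rw [← htop]; trivial
    have hker : Ideal.ofList [X 0 ^ m, X 1 ^ m, d]
        ≤ RingHom.ker (MvPowerSeries.constantCoeff (σ := Fin 3) (R := k)) := by
      rw [Ideal.span_le]
      intro r hr
      simp only [Set.mem_setOf_eq, List.mem_cons, List.not_mem_nil, or_false] at hr
      rw [SetLike.mem_coe]
      have hXc : ∀ s : Fin 3, MvPowerSeries.constantCoeff (σ := Fin 3) (R := k) (X s) = 0 := fun s =>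
        MvPowerSeries.constantCoeff_X s
      rcases hr with rfl | rfl | rfl
      · simp [RingHom.mem_ker, map_pow, hXc, zero_pow (by omega : m ≠ 0)]
      · simp [RingHom.mem_ker, map_pow, hXc, zero_pow (by omega : m ≠ 0)]
      · rw [RingHom.mem_ker, hd, dSeq, RingHom.map_det]
        have hmap : (Umat (X 0) (X 1) (X 2) m).map
            (MvPowerSeries.constantCoeff (σ := Fin 3) (R := k)) = 0 := by
          ext i j
          rw [Matrix.map_apply]
          show (MvPowerSeries.constantCoeff (σ := Fin 3) (R := k))
            (if (i : ℕ) + (j : ℕ) + 2 = m then X 0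
              else if (i : ℕ) + (j : ℕ) + 2 = m + 1 then X 2
              else if (i : ℕ) + (j : ℕ) + 2 = m + 2 then X 1
              else 0) = _
          split_ifs <;> simp [hXc]
        rw [RingHom.mapMatrix_apply, hmap, (by haveI : Nonempty (Fin m) := ⟨⟨0, by omega⟩⟩; exact Matrix.det_zero :
          Matrix.det (0 : Matrix (Fin m) (Fin m) k) = 0)]
    have := hker h1
    rw [RingHom.mem_ker, map_one] at this
    exact one_ne_zero this
end

section
/- Let Q = k[[x,y,z]] be the power series ring in three variables over a field k with maximal ideal 𝔫 = (x,y,z), and for m ≥ 2 let 𝔤_m be the ideal of Q generated by the 2m+1 elements x^{m−i} d_i and y^{m−i} d_i for 0 ≤ i ≤ m−1 together with d_m. Then 𝔤_m ⊆ 𝔫², 𝔤_m is 𝔫-primary, and these 2m+1 elements minimally generate 𝔤_m, i.e., μ(𝔤_m) = 2m+1 and their images form a k-basis of 𝔤_m/𝔫𝔤_m. -/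
open MvPowerSeries Finsupp


/-- `d_i` in `Q = k[[x,y,z]]`, with `x = X 0`, `y = X 1`, `z = X 2`. -/
noncomputable def dPS (k : Type*) [Field k] (i : ℕ) : MvPowerSeries (Fin 3) k :=
  dSeq (MvPowerSeries.X 0) (MvPowerSeries.X 1) (MvPowerSeries.X 2) i

/-- The maximal ideal `𝔫 = (x, y, z)` of `Q = k[[x,y,z]]`. -/
noncomputable def nIdeal (k : Type*) [Field k] : Ideal (MvPowerSeries (Fin 3) k) :=
  Ideal.span {MvPowerSeries.X 0, MvPowerSeries.X 1, MvPowerSeries.X 2}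

/-- The `2m + 1` generators of the Gorenstein ideal `𝔤_m ⊆ k[[x,y,z]]`:
`x^{m-i} d_i` for `0 ≤ i ≤ m - 1` (indices `0, …, m-1`), `y^{m-i} d_i` for
`0 ≤ i ≤ m - 1` (indices `m, …, 2m-1`), and `d_m` (index `2m`). -/
noncomputable def gGens (k : Type*) [Field k] (m : ℕ) :
    Fin (2 * m + 1) → MvPowerSeries (Fin 3) k := fun i =>
  if (i : ℕ) < m then MvPowerSeries.X 0 ^ (m - (i : ℕ)) * dPS k (i : ℕ)
  else if (i : ℕ) < 2 * m then
    MvPowerSeries.X 1 ^ (m - ((i : ℕ) - m)) * dPS k ((i : ℕ) - m)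
  else dPS k m

/-- The Gorenstein ideal `𝔤_m` of `k[[x,y,z]]` generated by the sub-maximal Pfaffians
`x^{m-i} d_i`, `y^{m-i} d_i` (`0 ≤ i ≤ m - 1`) and `d_m`. -/
noncomputable def gIdeal (k : Type*) [Field k] (m : ℕ) :
    Ideal (MvPowerSeries (Fin 3) k) :=
  Ideal.span (Set.range (gGens k m))

section GorHelpers

variable {k : Type*} [Field k]



/-- least variable with nonzero exponent -/
def Gor.minv (μ : Fin 3 →₀ ℕ) : Fin 3 :=
  if μ 0 ≠ 0 then 0 else if μ 1 ≠ 0 then 1 else 2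

lemma Gor.minv_spec (μ : Fin 3 →₀ ℕ) (h : μ ≠ 0) : μ (Gor.minv μ) ≠ 0 := by
  unfold Gor.minv
  split_ifs with h0 h1
  · exact h0
  · exact h1
  · push_neg at h0 h1
    intro h2
    apply h
    ext v
    fin_cases v <;> simp_all


noncomputable def Gor.part (f : MvPowerSeries (Fin 3) k) (v : Fin 3) : MvPowerSeries (Fin 3) k :=
  fun μ => if Gor.minv (μ + Finsupp.single v 1) = v
    then MvPowerSeries.coeff (μ + Finsupp.single v 1) f else 0

lemma Gor.coeff_part (f : MvPowerSeries (Fin 3) k) (v : Fin 3) (μ : Fin 3 →₀ ℕ) :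
    MvPowerSeries.coeff μ (Gor.part f v) =
      if Gor.minv (μ + Finsupp.single v 1) = v
        then MvPowerSeries.coeff (μ + Finsupp.single v 1) f else 0 := rfl

lemma Gor.exists_decomp (f : MvPowerSeries (Fin 3) k)
    (hf : MvPowerSeries.coeff 0 f = 0) :
    ∃ g : Fin 3 → MvPowerSeries (Fin 3) k,
      f = ∑ v : Fin 3, MvPowerSeries.X v * g v ∧
      ∀ v μ, MvPowerSeries.coeff μ (g v) ≠ 0 →
        MvPowerSeries.coeff (μ + Finsupp.single v 1) f ≠ 0 := by
  classical
  refine ⟨Gor.part f, ?_, ?_⟩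
  · ext μ
    rw [map_sum]
    have hX : ∀ v (g : MvPowerSeries (Fin 3) k),
        MvPowerSeries.coeff μ (MvPowerSeries.X v * g) =
          if Finsupp.single v 1 ≤ μ then MvPowerSeries.coeff (μ - Finsupp.single v 1) g
          else 0 := by
      intro v g
      rw [MvPowerSeries.X, MvPowerSeries.coeff_monomial_mul]
      simp
    by_cases hμ : μ = 0
    · subst hμ
      rw [hf]
      rw [Finset.sum_eq_zero]
      intro v _
      rw [hX]
      rw [if_neg]
      intro hle
      have := hle v
      simp at this
    · set v₀ := Gor.minv μ with hv₀
      have hv₀ne := Gor.minv_spec μ hμ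
      have hle : Finsupp.single v₀ 1 ≤ μ := by
        rw [Finsupp.single_le_iff, hv₀]
        omega
      rw [Finset.sum_eq_single v₀]
      · rw [hX, if_pos hle, Gor.coeff_part, tsub_add_cancel_of_le hle, if_pos hv₀.symm]
      · intro v _ hv
        rw [hX]
        split_ifs with hle'
        · rw [Gor.coeff_part, tsub_add_cancel_of_le hle', if_neg]
          rw [← hv₀]
          exact fun h => hv h.symm
        · rfl
      · intro h
        exact absurd (Finset.mem_univ v₀) h
  · intro v μ h
    rw [Gor.coeff_part] at h
    split_ifs at h with h'
    · exact h
    · exact absurd rfl h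

lemma Gor.mem_nIdeal_iff (f : MvPowerSeries (Fin 3) k) :
    f ∈ nIdeal k ↔ MvPowerSeries.constantCoeff (σ := Fin 3) (R := k) f = 0 := by
  constructor
  · intro hf
    have : nIdeal k ≤ RingHom.ker (MvPowerSeries.constantCoeff (σ := Fin 3) (R := k)) := by
      rw [nIdeal, Ideal.span_le]
      rintro g (rfl | rfl | rfl) <;>
        simp [RingHom.mem_ker, MvPowerSeries.constantCoeff_X]
    exact this hf
  · intro hf
    obtain ⟨g, hg, -⟩ := Gor.exists_decomp f (by rwa [← MvPowerSeries.coeff_zero_eq_constantCoeff] at hf)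
    rw [hg]
    apply Ideal.sum_mem
    intro v _
    apply Ideal.mul_mem_right
    apply Ideal.subset_span
    fin_cases v <;> simp

lemma Gor.nIdeal_eq_ker :
    nIdeal k = RingHom.ker (MvPowerSeries.constantCoeff (σ := Fin 3) (R := k)) := by
  ext f
  rw [Gor.mem_nIdeal_iff, RingHom.mem_ker]

lemma Gor.nIdeal_isMaximal : (nIdeal k).IsMaximal := by
  rw [Gor.nIdeal_eq_ker]
  exact RingHom.ker_isMaximal_of_surjective _
    (fun a => ⟨MvPowerSeries.C (σ := Fin 3) (R := k) a, MvPowerSeries.constantCoeff_C a⟩)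

/-- total degree of a monomial exponent -/
def Gor.deg (μ : Fin 3 →₀ ℕ) : ℕ := μ 0 + μ 1 + μ 2

lemma Gor.deg_add (μ ν : Fin 3 →₀ ℕ) : Gor.deg (μ + ν) = Gor.deg μ + Gor.deg ν := by
  simp [Gor.deg]; ring

/-- The ideal of power series of order at least `j`. -/
def Gor.ordGE (k : Type*) [Field k] (j : ℕ) : Ideal (MvPowerSeries (Fin 3) k) where
  carrier := {f | ∀ μ, Gor.deg μ < j → MvPowerSeries.coeff μ f = 0}
  zero_mem' := by intro μ _; simp
  add_mem' := by
    intro f g hf hg μ hμ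
    rw [map_add, hf μ hμ, hg μ hμ, add_zero]
  smul_mem' := by
    intro c f hf μ hμ
    rw [smul_eq_mul, MvPowerSeries.coeff_mul]
    apply Finset.sum_eq_zero
    intro p hp
    rw [Finset.HasAntidiagonal.mem_antidiagonal] at hp
    have : Gor.deg p.2 ≤ Gor.deg μ := by
      rw [← hp, Gor.deg_add]; omega
    rw [hf p.2 (lt_of_le_of_lt this hμ), mul_zero]

lemma Gor.mem_ordGE {j : ℕ} {f : MvPowerSeries (Fin 3) k} :
    f ∈ Gor.ordGE k j ↔ ∀ μ, Gor.deg μ < j → MvPowerSeries.coeff μ f = 0 := Iff.rfl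

lemma Gor.mul_mem_ordGE {i j : ℕ} {f g : MvPowerSeries (Fin 3) k}
    (hf : f ∈ Gor.ordGE k i) (hg : g ∈ Gor.ordGE k j) : f * g ∈ Gor.ordGE k (i + j) := by
  intro μ hμ
  rw [MvPowerSeries.coeff_mul]
  apply Finset.sum_eq_zero
  intro p hp
  rw [Finset.HasAntidiagonal.mem_antidiagonal] at hp
  have hd : Gor.deg p.1 + Gor.deg p.2 = Gor.deg μ := by rw [← Gor.deg_add, hp]
  rcases lt_or_ge (Gor.deg p.1) i with h | h
  · rw [hf p.1 h, zero_mul]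
  · rw [hg p.2 (by omega), mul_zero]

lemma Gor.X_mem_ordGE (v : Fin 3) : MvPowerSeries.X v ∈ Gor.ordGE k 1 := by
  intro μ hμ
  rw [MvPowerSeries.X, MvPowerSeries.coeff_monomial]
  rw [if_neg]
  rintro rfl
  have : Gor.deg (Finsupp.single v 1) = 1 := by fin_cases v <;> simp [Gor.deg]
  omega

lemma Gor.ordGE_one (f : MvPowerSeries (Fin 3) k) (hf : f ∈ Gor.ordGE k 1) :
    f ∈ nIdeal k := by
  rw [Gor.mem_nIdeal_iff, ← MvPowerSeries.coeff_zero_eq_constantCoeff]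
  exact hf 0 (by simp [Gor.deg])

lemma Gor.ordGE_two (f : MvPowerSeries (Fin 3) k) (hf : f ∈ Gor.ordGE k 2) :
    f ∈ nIdeal k ^ 2 := by
  obtain ⟨g, hg, hco⟩ := Gor.exists_decomp f (hf 0 (by simp [Gor.deg]))
  rw [hg]
  apply Ideal.sum_mem
  intro v _
  rw [sq]
  apply Ideal.mul_mem_mul
  · apply Ideal.subset_span; fin_cases v <;> simp
  · apply Gor.ordGE_one
    intro μ hμ
    by_contra hne
    refine hco v μ hne (hf _ ?_)
    rw [Gor.deg_add]
    have : Gor.deg (Finsupp.single v 1) = 1 := by fin_cases v <;> simp [Gor.deg]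
    omega

/-- variable class of entry `(σ b, b)` of `U_m` -/
def Gor.wfun (m : ℕ) (σ : Equiv.Perm (Fin m)) (b : Fin m) : Fin 3 :=
  if ((σ b : ℕ)) + (b : ℕ) + 2 = m then 0
  else if ((σ b : ℕ)) + (b : ℕ) + 2 = m + 1 then 2 else 1

/-- the exponent of the monomial contributed by `σ` -/
noncomputable def Gor.nu (m : ℕ) (σ : Equiv.Perm (Fin m)) : Fin 3 →₀ ℕ :=
  ∑ b : Fin m, Finsupp.single (Gor.wfun m σ b) 1

/-- goodness of a permutation -/
def Gor.good (m : ℕ) (σ : Equiv.Perm (Fin m)) : Prop :=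
  ∀ b : Fin m, m ≤ ((σ b : ℕ)) + (b : ℕ) + 2 ∧ ((σ b : ℕ)) + (b : ℕ) + 2 ≤ m + 2

lemma Gor.prod_X {ι : Type*} (s : Finset ι) (w : ι → Fin 3) :
    (∏ b ∈ s, MvPowerSeries.X (w b) : MvPowerSeries (Fin 3) k) =
      MvPowerSeries.monomial (∑ b ∈ s, Finsupp.single (w b) 1) 1 := by
  classical
  induction s using Finset.induction_on with
  | empty => simp
  | insert _ _ hb ih =>
    rw [Finset.prod_insert hb, Finset.sum_insert hb, ih, MvPowerSeries.X,
      MvPowerSeries.monomial_mul_monomial, one_mul]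

lemma Gor.entry_eq {m : ℕ} (σ : Equiv.Perm (Fin m)) (hσ : Gor.good m σ) (b : Fin m) :
    Umat (MvPowerSeries.X 0) (MvPowerSeries.X 1) (MvPowerSeries.X 2) m (σ b) b =
      (MvPowerSeries.X (Gor.wfun m σ b) : MvPowerSeries (Fin 3) k) := by
  obtain ⟨h1, h2⟩ := hσ b
  rw [Umat, Matrix.of_apply, Gor.wfun]
  split_ifs with e1 e2 e3 <;> try rfl
  omega

lemma Gor.prodU_eq {m : ℕ} (σ : Equiv.Perm (Fin m)) (hσ : Gor.good m σ) :
    (∏ b : Fin m,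
        Umat (MvPowerSeries.X 0) (MvPowerSeries.X 1) (MvPowerSeries.X 2) m (σ b) b :
          MvPowerSeries (Fin 3) k) =
      MvPowerSeries.monomial (Gor.nu m σ) 1 := by
  rw [show (∏ b : Fin m,
        Umat (MvPowerSeries.X 0) (MvPowerSeries.X 1) (MvPowerSeries.X 2) m (σ b) b :
          MvPowerSeries (Fin 3) k) = ∏ b : Fin m, MvPowerSeries.X (Gor.wfun m σ b) from
      Finset.prod_congr rfl fun b _ => Gor.entry_eq σ hσ b]
  exact Gor.prod_X Finset.univ (Gor.wfun m σ)

lemma Gor.prodU_bad {m : ℕ} (σ : Equiv.Perm (Fin m)) (hσ : ¬ Gor.good m σ) :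
    (∏ b : Fin m,
        Umat (MvPowerSeries.X 0) (MvPowerSeries.X 1) (MvPowerSeries.X 2) m (σ b) b :
          MvPowerSeries (Fin 3) k) = 0 := by
  rw [Gor.good] at hσ
  push_neg at hσ
  obtain ⟨b, hb⟩ := hσ
  apply Finset.prod_eq_zero (Finset.mem_univ b)
  rw [Umat, Matrix.of_apply]
  split_ifs with e1 e2 e3 <;> first | omega | rfl

lemma Gor.nu_apply (m : ℕ) (σ : Equiv.Perm (Fin m)) (v : Fin 3) :
    Gor.nu m σ v = ∑ b : Fin m, (if Gor.wfun m σ b = v then 1 else 0) := by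
  rw [Gor.nu, Finsupp.finset_sum_apply]
  congr 1
  ext b
  rw [Finsupp.single_apply]

lemma Gor.nu_deg (m : ℕ) (σ : Equiv.Perm (Fin m)) : Gor.deg (Gor.nu m σ) = m := by
  rw [Gor.deg, Gor.nu_apply, Gor.nu_apply, Gor.nu_apply, ← Finset.sum_add_distrib,
    ← Finset.sum_add_distrib]
  have : ∀ b : Fin m,
      (((if Gor.wfun m σ b = 0 then 1 else 0) + if Gor.wfun m σ b = 1 then 1 else 0)
        + if Gor.wfun m σ b = 2 then 1 else 0) = 1 := by
    intro b
    obtain ⟨n, hn⟩ := Gor.wfun m σ b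
    interval_cases n <;> simp [Fin.ext_iff]
  rw [Finset.sum_congr rfl fun b _ => this b]
  simp

lemma Gor.nu_balanced {m : ℕ} (σ : Equiv.Perm (Fin m)) (hσ : Gor.good m σ) :
    Gor.nu m σ 0 = Gor.nu m σ 1 := by
  have hS : ∑ b : Fin m, ((σ b : ℕ) + (b : ℕ) + 2)
      = ∑ b : Fin m, (m + ((if Gor.wfun m σ b = 2 then 1 else 0)
          + 2 * (if Gor.wfun m σ b = 1 then 1 else 0))) := by
    apply Finset.sum_congr rfl
    intro b _
    obtain ⟨h1, h2⟩ := hσ b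
    rw [Gor.wfun]
    split_ifs with e1 e2 <;> omega
  have hS2 : ∑ b : Fin m, ((σ b : ℕ) + (b : ℕ) + 2)
      = (∑ b : Fin m, (b : ℕ)) + (∑ b : Fin m, (b : ℕ)) + 2 * m := by
    rw [Finset.sum_add_distrib, Finset.sum_add_distrib]
    rw [Equiv.sum_comp σ (fun b : Fin m => (b : ℕ))]
    simp [mul_comm]
  have hA : (∑ b : Fin m, (b : ℕ)) * 2 = m * (m - 1) := by
    rw [Fin.sum_univ_eq_sum_range (fun i => i) m]
    exact Finset.sum_range_id_mul_two m
  have hmm : m * m = m * (m - 1) + m := by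
    cases m with
    | zero => simp
    | succ n => simp [Nat.succ_sub_one]; ring
  have hRHS : ∑ b : Fin m, (m + ((if Gor.wfun m σ b = 2 then 1 else 0)
          + 2 * (if Gor.wfun m σ b = 1 then 1 else 0)))
      = m * m + (Gor.nu m σ 2 + 2 * Gor.nu m σ 1) := by
    rw [Finset.sum_add_distrib, Finset.sum_add_distrib, ← Finset.mul_sum, Gor.nu_apply,
      Gor.nu_apply]
    simp [mul_comm]
  have hdeg := Gor.nu_deg m σ
  rw [Gor.deg] at hdeg
  rw [hS2, hRHS] at hS
  set a0 := Gor.nu m σ 0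
  set a1 := Gor.nu m σ 1
  set a2 := Gor.nu m σ 2
  set A := ∑ b : Fin m, (b : ℕ) with hAdef
  set P := m * (m - 1) with hP
  set M2 := m * m with hM2
  omega

lemma Gor.dPS_support {m : ℕ} (μ : Fin 3 →₀ ℕ)
    (h : MvPowerSeries.coeff μ (dPS k m) ≠ 0) :
    μ 0 = μ 1 ∧ Gor.deg μ = m := by
  rw [dPS, dSeq, Matrix.det_apply, map_sum] at h
  obtain ⟨σ, -, hσ⟩ := Finset.exists_ne_zero_of_sum_ne_zero h
  rw [Units.smul_def, map_zsmul] at hσ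
  have hσ' : MvPowerSeries.coeff (R := k) μ
      (∏ b : Fin m,
        Umat (MvPowerSeries.X 0) (MvPowerSeries.X 1) (MvPowerSeries.X 2) m (σ b) b) ≠ 0 := by
    intro h0
    rw [h0, smul_zero] at hσ
    exact hσ rfl
  have hgood : Gor.good m σ := by
    by_contra hbad
    rw [Gor.prodU_bad σ hbad, map_zero] at hσ'
    exact hσ' rfl
  rw [Gor.prodU_eq σ hgood, MvPowerSeries.coeff_monomial] at hσ'
  have hμ : μ = Gor.nu m σ := by
    by_contra hne
    rw [if_neg hne] at hσ'
    exact hσ' rfl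
  rw [hμ]
  exact ⟨Gor.nu_balanced σ hgood, Gor.nu_deg m σ⟩

lemma Gor.rev_val {m : ℕ} (b : Fin m) : ((Fin.revPerm b : Fin m) : ℕ) = m - ((b : ℕ) + 1) := by
  rw [Fin.revPerm_apply, Fin.val_rev]

lemma Gor.rev_good (m : ℕ) : Gor.good m (Fin.revPerm : Equiv.Perm (Fin m)) := by
  intro b
  have hb : (b : ℕ) < m := b.isLt
  rw [Gor.rev_val]
  omega

lemma Gor.nu_rev (m : ℕ) :
    Gor.nu m (Fin.revPerm : Equiv.Perm (Fin m)) = Finsupp.single 2 m := by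
  have hw : ∀ b : Fin m, Gor.wfun m (Fin.revPerm : Equiv.Perm (Fin m)) b = 2 := by
    intro b
    have hb : (b : ℕ) < m := b.isLt
    rw [Gor.wfun, Gor.rev_val]
    rw [if_neg (by omega), if_pos (by omega)]
  ext v
  rw [Gor.nu_apply]
  rw [Finset.sum_congr rfl fun b _ => by rw [hw b]]
  rw [Finsupp.single_apply]
  split_ifs with h
  · simp
  · simp

lemma Gor.sigma_eq_rev {m : ℕ} (σ : Equiv.Perm (Fin m)) (hgood : Gor.good m σ)
    (h : Gor.nu m σ = Finsupp.single 2 m) : σ = (Fin.revPerm : Equiv.Perm (Fin m)) := by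
  have hw : ∀ b : Fin m, Gor.wfun m σ b = 2 := by
    intro b
    have h0 : Gor.nu m σ 0 = 0 := by rw [h]; simp [Finsupp.single_apply]
    have h1 : Gor.nu m σ 1 = 0 := by rw [h]; simp [Finsupp.single_apply]
    rw [Gor.nu_apply] at h0 h1
    rw [Finset.sum_eq_zero_iff] at h0 h1
    have e0 := h0 b (Finset.mem_univ b)
    have e1 := h1 b (Finset.mem_univ b)
    clear h0 h1
    generalize Gor.wfun m σ b = v at e0 e1 ⊢
    fin_cases v <;> simp at e0 e1 ⊢
  ext b
  have hb2 := hw b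
  rw [Gor.wfun] at hb2
  obtain ⟨hg1, hg2⟩ := hgood b
  have hb : (b : ℕ) < m := b.isLt
  have hσ : ((σ b : Fin m) : ℕ) = m - 1 - (b : ℕ) := by
    split_ifs at hb2 with e1 e2
    · exact absurd hb2 (by decide)
    · omega
    · exact absurd hb2 (by decide)
  have hrev := Gor.rev_val b
  omega

lemma Gor.coeff_z_dPS (m : ℕ) :
    MvPowerSeries.coeff (Finsupp.single 2 m) (dPS k m) ≠ 0 := by
  rw [dPS, dSeq, Matrix.det_apply, map_sum]
  rw [Finset.sum_eq_single (Fin.revPerm : Equiv.Perm (Fin m))]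
  · rw [Units.smul_def, map_zsmul, Gor.prodU_eq _ (Gor.rev_good m), Gor.nu_rev,
      MvPowerSeries.coeff_monomial, if_pos rfl]
    rcases Int.units_eq_one_or (Equiv.Perm.sign (Fin.revPerm : Equiv.Perm (Fin m))) with h | h <;>
      rw [h] <;> simp
  · intro σ _ hσ
    rw [Units.smul_def, map_zsmul]
    by_cases hgood : Gor.good m σ
    · rw [Gor.prodU_eq σ hgood, MvPowerSeries.coeff_monomial, if_neg, smul_zero]
      intro he
      exact hσ (Gor.sigma_eq_rev σ hgood he.symm)
    · rw [Gor.prodU_bad σ hgood, map_zero, smul_zero]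
  · intro h
    exact absurd (Finset.mem_univ _) h

lemma Gor.coeff_xpow_mul {p i : ℕ} {v : Fin 3} {μ : Fin 3 →₀ ℕ}
    (h : MvPowerSeries.coeff μ (MvPowerSeries.X v ^ p * dPS k i) ≠ 0) :
    ∃ ν : Fin 3 →₀ ℕ, μ = Finsupp.single v p + ν ∧ ν 0 = ν 1 ∧ Gor.deg ν = i := by
  rw [MvPowerSeries.X_pow_eq, MvPowerSeries.coeff_monomial_mul] at h
  split_ifs at h with hle
  · rw [one_mul] at h
    exact ⟨μ - Finsupp.single v p, (add_tsub_cancel_of_le hle).symm,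
      (Gor.dPS_support _ h).1, (Gor.dPS_support _ h).2⟩
  · exact absurd rfl h

lemma Gor.coeff_xpow_mul_add (p i : ℕ) (v : Fin 3) (ν : Fin 3 →₀ ℕ) :
    MvPowerSeries.coeff (Finsupp.single v p + ν) (MvPowerSeries.X v ^ p * dPS k i) =
      MvPowerSeries.coeff ν (dPS k i) := by
  rw [MvPowerSeries.X_pow_eq, MvPowerSeries.coeff_add_monomial_mul, one_mul]

/-- the distinguished monomial used to detect generator `i` -/
noncomputable def Gor.mon (m : ℕ) (i : Fin (2 * m + 1)) : Fin 3 →₀ ℕ :=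
  if (i : ℕ) < m then Finsupp.single 0 (m - (i : ℕ)) + Finsupp.single 2 (i : ℕ)
  else if (i : ℕ) < 2 * m then
    Finsupp.single 1 (m - ((i : ℕ) - m)) + Finsupp.single 2 ((i : ℕ) - m)
  else Finsupp.single 2 m

lemma Gor.coeff_mon_gGens_ne {m : ℕ} (i j : Fin (2 * m + 1)) (hne : (j : ℕ) ≠ (i : ℕ)) :
    MvPowerSeries.coeff (Gor.mon m i) (gGens k m j) = 0 := by
  by_contra h
  have hjlt : (j : ℕ) < 2 * m + 1 := j.isLt
  have hilt : (i : ℕ) < 2 * m + 1 := i.isLt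
  simp only [gGens] at h
  by_cases hj1 : (j : ℕ) < m
  · rw [if_pos hj1] at h
    obtain ⟨ν, heq, hbal, hdeg⟩ := Gor.coeff_xpow_mul h
    rw [Gor.deg] at hdeg
    have e0 := DFunLike.congr_fun heq (0 : Fin 3)
    have e1 := DFunLike.congr_fun heq (1 : Fin 3)
    have e2 := DFunLike.congr_fun heq (2 : Fin 3)
    simp only [Gor.mon] at e0 e1 e2
    by_cases hi1 : (i : ℕ) < m
    · rw [if_pos hi1] at e0 e1 e2
      simp [Finsupp.single_apply] at e0 e1 e2
      omega
    · by_cases hi2 : (i : ℕ) < 2 * m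
      · rw [if_neg hi1, if_pos hi2] at e0 e1 e2
        simp [Finsupp.single_apply] at e0 e1 e2
        omega
      · rw [if_neg hi1, if_neg hi2] at e0 e1 e2
        simp [Finsupp.single_apply] at e0 e1 e2
        omega
  · by_cases hj2 : (j : ℕ) < 2 * m
    · rw [if_neg hj1, if_pos hj2] at h
      obtain ⟨ν, heq, hbal, hdeg⟩ := Gor.coeff_xpow_mul h
      rw [Gor.deg] at hdeg
      have e0 := DFunLike.congr_fun heq (0 : Fin 3)
      have e1 := DFunLike.congr_fun heq (1 : Fin 3)
      have e2 := DFunLike.congr_fun heq (2 : Fin 3)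
      simp only [Gor.mon] at e0 e1 e2
      by_cases hi1 : (i : ℕ) < m
      · rw [if_pos hi1] at e0 e1 e2
        simp [Finsupp.single_apply] at e0 e1 e2
        omega
      · by_cases hi2 : (i : ℕ) < 2 * m
        · rw [if_neg hi1, if_pos hi2] at e0 e1 e2
          simp [Finsupp.single_apply] at e0 e1 e2
          omega
        · rw [if_neg hi1, if_neg hi2] at e0 e1 e2
          simp [Finsupp.single_apply] at e0 e1 e2
          omega
    · rw [if_neg hj1, if_neg hj2] at h
      obtain ⟨hbal, hdeg⟩ := Gor.dPS_support _ h
      rw [Gor.deg] at hdeg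
      by_cases hi1 : (i : ℕ) < m
      · simp only [Gor.mon, if_pos hi1] at hbal hdeg
        simp [Finsupp.single_apply] at hbal hdeg
        omega
      · by_cases hi2 : (i : ℕ) < 2 * m
        · simp only [Gor.mon, if_neg hi1, if_pos hi2] at hbal hdeg
          simp [Finsupp.single_apply] at hbal hdeg
          omega
        · omega

lemma Gor.coeff_mon_gGens_self {m : ℕ} (i : Fin (2 * m + 1)) :
    MvPowerSeries.coeff (Gor.mon m i) (gGens k m i) ≠ 0 := by
  by_cases hi1 : (i : ℕ) < m
  · simp only [gGens, Gor.mon, if_pos hi1]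
    rw [Gor.coeff_xpow_mul_add]
    exact Gor.coeff_z_dPS (i : ℕ)
  · by_cases hi2 : (i : ℕ) < 2 * m
    · simp only [gGens, Gor.mon, if_neg hi1, if_pos hi2]
      rw [Gor.coeff_xpow_mul_add]
      exact Gor.coeff_z_dPS _
    · simp only [gGens, Gor.mon, if_neg hi1, if_neg hi2]
      exact Gor.coeff_z_dPS m

lemma Gor.deg_mon {m : ℕ} (i : Fin (2 * m + 1)) : Gor.deg (Gor.mon m i) = m := by
  have hilt : (i : ℕ) < 2 * m + 1 := i.isLt
  by_cases hi1 : (i : ℕ) < m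
  · simp only [Gor.mon, if_pos hi1, Gor.deg]
    simp [Finsupp.single_apply]
    omega
  · by_cases hi2 : (i : ℕ) < 2 * m
    · simp only [Gor.mon, if_neg hi1, if_pos hi2, Gor.deg]
      simp [Finsupp.single_apply]
      omega
    · simp only [Gor.mon, if_neg hi1, if_neg hi2, Gor.deg]
      simp [Finsupp.single_apply]

lemma Gor.X_pow_mem_ordGE (v : Fin 3) (p : ℕ) :
    (MvPowerSeries.X v : MvPowerSeries (Fin 3) k) ^ p ∈ Gor.ordGE k p := by
  induction p with
  | zero => intro μ hμ; omega
  | succ n ih =>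
    rw [pow_succ]
    exact Gor.mul_mem_ordGE ih (Gor.X_mem_ordGE v)

lemma Gor.dPS_mem_ordGE (i : ℕ) : dPS k i ∈ Gor.ordGE k i := by
  intro μ hμ
  by_contra h
  have := (Gor.dPS_support μ h).2
  omega

lemma Gor.gGens_mem_ordGE {m : ℕ} (j : Fin (2 * m + 1)) :
    gGens k m j ∈ Gor.ordGE k m := by
  have hjlt : (j : ℕ) < 2 * m + 1 := j.isLt
  simp only [gGens]
  by_cases hj1 : (j : ℕ) < m
  · rw [if_pos hj1]
    have := Gor.mul_mem_ordGE (Gor.X_pow_mem_ordGE (k := k) 0 (m - (j : ℕ)))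
      (Gor.dPS_mem_ordGE (j : ℕ))
    rwa [Nat.sub_add_cancel hj1.le] at this
  · by_cases hj2 : (j : ℕ) < 2 * m
    · rw [if_neg hj1, if_pos hj2]
      have := Gor.mul_mem_ordGE (Gor.X_pow_mem_ordGE (k := k) 1 (m - ((j : ℕ) - m)))
        (Gor.dPS_mem_ordGE ((j : ℕ) - m))
      rwa [Nat.sub_add_cancel (by omega)] at this
    · rw [if_neg hj1, if_neg hj2]
      exact Gor.dPS_mem_ordGE m

lemma Gor.nIdeal_le_ordGE : nIdeal k ≤ Gor.ordGE k 1 := by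
  rw [nIdeal, Ideal.span_le]
  rintro g (rfl | rfl | rfl) <;> exact Gor.X_mem_ordGE _

lemma Gor.gIdeal_le_ordGE (m : ℕ) : gIdeal k m ≤ Gor.ordGE k m := by
  rw [gIdeal, Ideal.span_le]
  rintro g ⟨j, rfl⟩
  exact Gor.gGens_mem_ordGE j

lemma Gor.mul_gIdeal_le (m : ℕ) : nIdeal k * gIdeal k m ≤ Gor.ordGE k (1 + m) :=
  le_trans (Ideal.mul_le.mpr fun r hr s hs =>
    Gor.mul_mem_ordGE (Gor.nIdeal_le_ordGE hr) (Gor.gIdeal_le_ordGE m hs)) le_rfl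

lemma Gor.deg_eq_zero {μ : Fin 3 →₀ ℕ} (h : Gor.deg μ = 0) : μ = 0 := by
  rw [Gor.deg] at h
  ext v
  fin_cases v <;> simp <;> omega

lemma Gor.coeff_mul_ordGE {m : ℕ} (c f : MvPowerSeries (Fin 3) k)
    (hf : f ∈ Gor.ordGE k m) (μ : Fin 3 →₀ ℕ) (hμ : Gor.deg μ = m) :
    MvPowerSeries.coeff μ (c * f) =
      MvPowerSeries.coeff 0 c * MvPowerSeries.coeff μ f := by
  classical
  rw [MvPowerSeries.coeff_mul]
  rw [Finset.sum_eq_single ((0 : Fin 3 →₀ ℕ), μ)]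
  · intro p hp hne
    rw [Finset.HasAntidiagonal.mem_antidiagonal] at hp
    rcases lt_or_ge (Gor.deg p.2) m with hd | hd
    · rw [hf p.2 hd, mul_zero]
    · have hdd : Gor.deg p.1 + Gor.deg p.2 = m := by rw [← Gor.deg_add, hp, hμ]
      have hp1 : p.1 = 0 := Gor.deg_eq_zero (by omega)
      have hp2 : p.2 = μ := by rw [← hp, hp1, zero_add]
      exact absurd (Prod.ext hp1 hp2) hne
  · intro hnm
    rw [Finset.HasAntidiagonal.mem_antidiagonal] at hnm
    simp at hnm

lemma Gor.indep {m : ℕ} (c : Fin (2 * m + 1) → MvPowerSeries (Fin 3) k)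
    (hc : (∑ i, c i * gGens k m i) ∈ nIdeal k * gIdeal k m) (i : Fin (2 * m + 1)) :
    c i ∈ nIdeal k := by
  have hz : MvPowerSeries.coeff (Gor.mon m i) (∑ j, c j * gGens k m j) = 0 := by
    apply Gor.mul_gIdeal_le m hc
    rw [Gor.deg_mon]
    omega
  rw [map_sum] at hz
  rw [Finset.sum_congr rfl (fun j _ => Gor.coeff_mul_ordGE (c j) _
    (Gor.gGens_mem_ordGE j) _ (Gor.deg_mon i))] at hz
  rw [Finset.sum_eq_single i] at hz
  · rw [Gor.mem_nIdeal_iff, ← MvPowerSeries.coeff_zero_eq_constantCoeff]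
    rcases mul_eq_zero.mp hz with h | h
    · exact h
    · exact absurd h (Gor.coeff_mon_gGens_self i)
  · intro j _ hne
    rw [Gor.coeff_mon_gGens_ne i j (fun he => hne (Fin.ext he)), mul_zero]
  · intro hni
    exact absurd (Finset.mem_univ i) hni

lemma Gor.ordGE_mono {i j : ℕ} (h : i ≤ j) : Gor.ordGE k j ≤ Gor.ordGE k i :=
  fun _f hf μ hμ => hf μ (lt_of_lt_of_le hμ h)

lemma Gor.gIdeal_le_sq {m : ℕ} (hm : 2 ≤ m) : gIdeal k m ≤ nIdeal k ^ 2 := by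
  rw [gIdeal, Ideal.span_le]
  rintro g ⟨j, rfl⟩
  exact Gor.ordGE_two _ (Gor.ordGE_mono hm (Gor.gGens_mem_ordGE j))

lemma Gor.gIdeal_le_nIdeal {m : ℕ} (hm : 2 ≤ m) : gIdeal k m ≤ nIdeal k :=
  le_trans (Gor.gIdeal_le_sq hm) (Ideal.pow_le_self two_ne_zero)

lemma Gor.X0_mem_span_of (f : MvPowerSeries (Fin 3) k)
    (h : ∀ μ : Fin 3 →₀ ℕ, μ 0 = 0 → MvPowerSeries.coeff μ f = 0) :
    f ∈ Ideal.span {(MvPowerSeries.X 0 : MvPowerSeries (Fin 3) k)} := by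
  rw [Ideal.mem_span_singleton]
  refine ⟨show MvPowerSeries (Fin 3) k from
    fun μ => MvPowerSeries.coeff (μ + Finsupp.single 0 1) f, ?_⟩
  ext μ
  rw [MvPowerSeries.X, MvPowerSeries.coeff_monomial_mul]
  split_ifs with hle
  · rw [one_mul]
    have : MvPowerSeries.coeff (μ - Finsupp.single 0 1 + Finsupp.single 0 1) f =
        MvPowerSeries.coeff μ f := by rw [tsub_add_cancel_of_le hle]
    exact this.symm ▸ rfl
  · rw [h μ]
    have := Finsupp.single_le_iff.not.mp hle
    omega

lemma Gor.gens_mem_radical {m : ℕ} (hm : 2 ≤ m) : nIdeal k ≤ (gIdeal k m).radical := by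
  have hd0 : dPS k 0 = 1 := Matrix.det_fin_zero
  have hx : (MvPowerSeries.X 0 : MvPowerSeries (Fin 3) k) ^ m ∈ gIdeal k m := by
    have h := Ideal.subset_span (Set.mem_range_self (f := gGens k m) ⟨0, by omega⟩)
    have he : gGens k m ⟨0, by omega⟩ =
        MvPowerSeries.X 0 ^ (m - 0) * dPS k 0 := by
      simp only [gGens]
      rw [if_pos (show ((⟨0, by omega⟩ : Fin (2 * m + 1)) : ℕ) < m by simp; omega)]
    rw [he, hd0, Nat.sub_zero, mul_one] at h
    exact h
  have hy : (MvPowerSeries.X 1 : MvPowerSeries (Fin 3) k) ^ m ∈ gIdeal k m := by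
    have h := Ideal.subset_span (Set.mem_range_self (f := gGens k m) ⟨m, by omega⟩)
    have he : gGens k m ⟨m, by omega⟩ =
        MvPowerSeries.X 1 ^ (m - (m - m)) * dPS k (m - m) := by
      simp only [gGens]
      rw [if_neg (show ¬ ((⟨m, by omega⟩ : Fin (2 * m + 1)) : ℕ) < m by simp),
        if_pos (show ((⟨m, by omega⟩ : Fin (2 * m + 1)) : ℕ) < 2 * m by simp; omega)]
    rw [Nat.sub_self, Nat.sub_zero, hd0, mul_one] at he
    rw [he] at h
    exact h
  have hdm : dPS k m ∈ gIdeal k m := by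
    have h := Ideal.subset_span (Set.mem_range_self (f := gGens k m) ⟨2 * m, by omega⟩)
    have he : gGens k m ⟨2 * m, by omega⟩ = dPS k m := by
      simp only [gGens]
      rw [if_neg (show ¬ ((⟨2 * m, by omega⟩ : Fin (2 * m + 1)) : ℕ) < m by simp; omega),
        if_neg (show ¬ ((⟨2 * m, by omega⟩ : Fin (2 * m + 1)) : ℕ) < 2 * m by simp)]
    rw [he] at h
    exact h
  have hX0 : (MvPowerSeries.X 0 : MvPowerSeries (Fin 3) k) ∈ (gIdeal k m).radical := ⟨m, hx⟩
  have hX1 : (MvPowerSeries.X 1 : MvPowerSeries (Fin 3) k) ∈ (gIdeal k m).radical := ⟨m, hy⟩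
  set ε := MvPowerSeries.coeff (Finsupp.single 2 m) (dPS k m) with hε
  have hεne : ε ≠ 0 := Gor.coeff_z_dPS m
  have hsub : dPS k m - MvPowerSeries.C (σ := Fin 3) (R := k) ε *
      (MvPowerSeries.X 2 : MvPowerSeries (Fin 3) k) ^ m ∈
        Ideal.span {(MvPowerSeries.X 0 : MvPowerSeries (Fin 3) k)} := by
    apply Gor.X0_mem_span_of
    intro μ hμ0
    rw [map_sub]
    have hcm : MvPowerSeries.C (σ := Fin 3) (R := k) ε *
        (MvPowerSeries.X 2 : MvPowerSeries (Fin 3) k) ^ m =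
          MvPowerSeries.monomial (Finsupp.single 2 m) ε := by
      rw [MvPowerSeries.X_pow_eq, ← MvPowerSeries.monomial_zero_eq_C_apply,
        MvPowerSeries.monomial_mul_monomial, zero_add, mul_one]
    rw [hcm, MvPowerSeries.coeff_monomial]
    by_cases hμ : μ = Finsupp.single 2 m
    · rw [if_pos hμ, hμ, ← hε, sub_self]
    · rw [if_neg hμ, sub_zero]
      by_contra hne
      obtain ⟨hbal, hdeg⟩ := Gor.dPS_support μ hne
      rw [Gor.deg] at hdeg
      apply hμ
      ext v
      fin_cases v <;> simp [Finsupp.single_apply] <;> omega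
  have hX2 : (MvPowerSeries.X 2 : MvPowerSeries (Fin 3) k) ∈ (gIdeal k m).radical := by
    have hspan : Ideal.span {(MvPowerSeries.X 0 : MvPowerSeries (Fin 3) k)} ≤
        (gIdeal k m).radical := by
      rw [Ideal.span_le, Set.singleton_subset_iff]
      exact hX0
    have hmem : MvPowerSeries.C (σ := Fin 3) (R := k) ε *
        (MvPowerSeries.X 2 : MvPowerSeries (Fin 3) k) ^ m ∈ (gIdeal k m).radical := by
      have : MvPowerSeries.C (σ := Fin 3) (R := k) ε *
          (MvPowerSeries.X 2 : MvPowerSeries (Fin 3) k) ^ m =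
            dPS k m - (dPS k m - MvPowerSeries.C (σ := Fin 3) (R := k) ε *
              (MvPowerSeries.X 2 : MvPowerSeries (Fin 3) k) ^ m) := by ring
      rw [this]
      exact Ideal.sub_mem _ (Ideal.le_radical hdm) (hspan hsub)
    have : (MvPowerSeries.X 2 : MvPowerSeries (Fin 3) k) ^ m =
        MvPowerSeries.C (σ := Fin 3) (R := k) ε⁻¹ * (MvPowerSeries.C (σ := Fin 3) (R := k) ε *
          (MvPowerSeries.X 2 : MvPowerSeries (Fin 3) k) ^ m) := by
      rw [← mul_assoc, ← map_mul, inv_mul_cancel₀ hεne, map_one, one_mul]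
    apply Ideal.mem_radical_of_pow_mem (m := m)
    rw [this]
    exact Ideal.mul_mem_left ((gIdeal k m).radical) _ hmem
  rw [nIdeal, Ideal.span_le]
  rintro g hg
  simp only [Set.mem_insert_iff, Set.mem_singleton_iff] at hg
  rcases hg with rfl | rfl | rfl
  · exact hX0
  · exact hX1
  · exact hX2

set_option maxHeartbeats 1000000 in
lemma Gor.radical_eq {m : ℕ} (hm : 2 ≤ m) : (gIdeal k m).radical = nIdeal k := by
  apply le_antisymm
  · have h2 : (gIdeal k m).radical ≤ (nIdeal k).radical :=
      Ideal.radical_mono (Gor.gIdeal_le_nIdeal hm)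
    rwa [Ideal.IsPrime.radical (Ideal.IsMaximal.isPrime (Gor.nIdeal_isMaximal (k := k)))] at h2
  · exact Gor.gens_mem_radical hm

lemma Gor.min_card {m n : ℕ} (f : Fin n → MvPowerSeries (Fin 3) k)
    (hspan : Ideal.span (Set.range f) = gIdeal k m) : 2 * m + 1 ≤ n := by
  classical
  have hg : ∀ i : Fin (2 * m + 1), ∃ a : Fin n → MvPowerSeries (Fin 3) k,
      ∑ j, a j • f j = gGens k m i := by
    intro i
    rw [← Submodule.mem_span_range_iff_exists_fun]
    have : gGens k m i ∈ Ideal.span (Set.range f) := by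
      rw [hspan, gIdeal]
      exact Ideal.subset_span (Set.mem_range_self i)
    exact this
  have hf : ∀ j : Fin n, ∃ b : Fin (2 * m + 1) → MvPowerSeries (Fin 3) k,
      ∑ l, b l • gGens k m l = f j := by
    intro j
    rw [← Submodule.mem_span_range_iff_exists_fun]
    have : f j ∈ Ideal.span (Set.range (gGens k m)) := by
      rw [← gIdeal, ← hspan]
      exact Ideal.subset_span (Set.mem_range_self j)
    exact this
  choose a ha using hg
  choose b hb using hf
  have key : ∀ i l, MvPowerSeries.constantCoeff (σ := Fin 3) (R := k) (∑ j, a i j * b j l) =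
      if l = i then 1 else 0 := by
    intro i l
    set c : Fin (2 * m + 1) → MvPowerSeries (Fin 3) k :=
      fun l => (∑ j, a i j * b j l) - (if l = i then 1 else 0) with hc
    have h1 : ∑ l, (∑ j, a i j * b j l) * gGens k m l = gGens k m i := by
      calc ∑ l, (∑ j, a i j * b j l) * gGens k m l
          = ∑ l, ∑ j, a i j * b j l * gGens k m l := by
            refine Finset.sum_congr rfl fun l _ => ?_
            rw [Finset.sum_mul]
        _ = ∑ j, ∑ l, a i j * b j l * gGens k m l := Finset.sum_comm
        _ = ∑ j, a i j * f j := by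
            refine Finset.sum_congr rfl fun j _ => ?_
            rw [← hb j, Finset.mul_sum]
            refine Finset.sum_congr rfl fun l _ => ?_
            rw [smul_eq_mul, mul_assoc]
        _ = gGens k m i := by
            rw [← ha i]
            exact Finset.sum_congr rfl fun j _ => by rw [smul_eq_mul]
    have h2 : ∑ l, (if l = i then (1 : MvPowerSeries (Fin 3) k) else 0) * gGens k m l
        = gGens k m i := by
      rw [Finset.sum_eq_single i]
      · rw [if_pos rfl, one_mul]
      · intro l _ hne
        rw [if_neg hne, zero_mul]
      · intro h
        exact absurd (Finset.mem_univ i) h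
    have hsum : ∑ l, c l * gGens k m l = 0 := by
      simp only [hc, sub_mul, Finset.sum_sub_distrib, h1, h2, sub_self]
    have hmem : (∑ l, c l * gGens k m l) ∈ nIdeal k * gIdeal k m := by
      rw [hsum]; exact Ideal.zero_mem _
    have hlc := Gor.indep c hmem l
    rw [Gor.mem_nIdeal_iff, hc] at hlc
    simp only [map_sub] at hlc
    have hone : MvPowerSeries.constantCoeff (σ := Fin 3) (R := k)
        (if l = i then (1 : MvPowerSeries (Fin 3) k) else 0) = if l = i then 1 else 0 := by
      split_ifs <;> simp
    rw [hone] at hlc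
    rwa [sub_eq_zero] at hlc
  set A : Matrix (Fin (2 * m + 1)) (Fin n) k :=
    Matrix.of fun i j => MvPowerSeries.constantCoeff (σ := Fin 3) (R := k) (a i j) with hA
  set B : Matrix (Fin n) (Fin (2 * m + 1)) k :=
    Matrix.of fun j l => MvPowerSeries.constantCoeff (σ := Fin 3) (R := k) (b j l) with hB
  have hAB : A * B = 1 := by
    ext i l
    rw [Matrix.mul_apply, Matrix.one_apply]
    have := key i l
    rw [map_sum] at this
    simp only [map_mul] at this
    rw [hA, hB]
    simp only [Matrix.of_apply]
    rw [this]
    by_cases h : i = l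
    · subst h; rfl
    · rw [if_neg (fun he => h he.symm), if_neg h]
  have h1 : (1 : Matrix (Fin (2 * m + 1)) (Fin (2 * m + 1)) k).rank = 2 * m + 1 := by
    rw [Matrix.rank_one, Fintype.card_fin]
  have h2 : (A * B).rank ≤ n := le_trans (Matrix.rank_mul_le_left A B)
    (le_trans (Matrix.rank_le_card_width A) (le_of_eq (Fintype.card_fin n)))
  rw [hAB, h1] at h2
  exact h2


end GorHelpers

/-- For `m ≥ 2`, the ideal `𝔤_m ⊆ k[[x,y,z]]` is contained in `𝔫²`, is `𝔫`-primary,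
and is minimally generated by the `2m + 1` elements `x^{m-i} d_i`, `y^{m-i} d_i`
(`0 ≤ i ≤ m-1`) and `d_m`: these elements generate `𝔤_m`, their images form a basis
of `𝔤_m / 𝔫𝔤_m` over `k`, and `μ(𝔤_m) = 2m + 1`, i.e. no fewer than `2m + 1`
elements generate `𝔤_m`. -/
theorem gIdeal_minimally_generated {k : Type*} [Field k] (m : ℕ) (hm : 2 ≤ m) :
    gIdeal k m ≤ nIdeal k ^ 2 ∧
    (gIdeal k m).radical = nIdeal k ∧
    Ideal.span (Set.range (gGens k m)) = gIdeal k m ∧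
    (∀ c : Fin (2 * m + 1) → MvPowerSeries (Fin 3) k,
      (∑ i, c i * gGens k m i) ∈ nIdeal k * gIdeal k m → ∀ i, c i ∈ nIdeal k) ∧
    (∀ (n : ℕ) (f : Fin n → MvPowerSeries (Fin 3) k),
      Ideal.span (Set.range f) = gIdeal k m → 2 * m + 1 ≤ n) :=
  ⟨Gor.gIdeal_le_sq hm, Gor.radical_eq hm, rfl, fun c hc i => Gor.indep c hc i,
    fun _n f hf => Gor.min_card f hf⟩
end
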